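/- arXiv:1203.1389 — 4 statements merged into one kernel-verified Lean document; each statement's English description precedes it below -/
import Mathlib

section
/- Let $p(\cdot)$ be any symmetric probability distribution on $\mathbb{Z}^d$, $d\geq 1$, with $p(0)\geq\frac{1}{2}$. For $x\in\mathbb{Z}^d$ let $\mathbb{P}^Z_x$ denote the law of a random walk $Z=(Z_n)_{n\geq 0}$ on $\mathbb{Z}^d$ with $Z_0=x$ and i.i.d. increments of law $p$. For a deterministic sequence $\phi=(\phi_i)_{i\geq 0}$ in $\mathbb{Z}^d$, define $\tilde\tau_\phi:=\min\{n\geq 0: Z_n=\phi_n \text{ or } Z_n=\phi_{n+1}\}$, and let $\tilde\tau_0$ denote this hitting time when $\phi\equiv 0$. Then for every $\phi$ and every $n\in\mathbb{N}$, $\sum_{x\in\mathbb{Z}^d} \mathbb{P}^Z_x(\tilde\tau_\phi\leq n) \geq \sum_{x\in\mathbb{Z}^d} \mathbb{P}^Z_x(\tilde\tau_0\leq n)$. -/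
open MeasureTheory ProbabilityTheory Finset
open scoped ENNReal

open Finset
open scoped ENNReal NNReal

set_option linter.unusedSectionVars false
set_option linter.unusedVariables false

namespace PascalAux

variable {V : Type*} [AddCommGroup V] [DecidableEq V]

/-- `r`-fold convolution power of `p`, evaluated at `z`. -/
noncomputable def qc (p : V → ℝ≥0∞) (r : ℕ) (z : V) : ℝ≥0∞ :=
  ∑' a : Fin r → V, if (∑ i, a i) = z then ∏ i, p (a i) else 0

lemma tsum_split_zero (f : V → ℝ≥0∞) :
    ∑' c, f c = f 0 + ∑' c, if c = 0 then 0 else f c := by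
  have : ∀ c, f c = (if c = 0 then f c else 0) + (if c = 0 then 0 else f c) := by
    intro c; by_cases h : c = 0 <;> simp [h]
  calc ∑' c, f c = ∑' c, ((if c = 0 then f c else 0) + (if c = 0 then 0 else f c)) := by
        exact tsum_congr this
    _ = (∑' c, if c = 0 then f c else 0) + ∑' c, if c = 0 then 0 else f c := ENNReal.tsum_add
    _ = f 0 + ∑' c, if c = 0 then 0 else f c := by
        congr 1
        refine tsum_eq_single 0 (fun b hb => by simp [hb]) |>.trans (by simp)

lemma qc_prod_total (p : V → ℝ≥0∞) (hsum : ∑' x, p x = 1) (r : ℕ) :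
    ∑' a : Fin r → V, ∏ i, p (a i) = 1 := by
  induction r with
  | zero =>
      rw [tsum_eq_single (fun i => i.elim0) (fun b hb => absurd (Subsingleton.elim b _) hb)]
      simp
  | succ r ih =>
      rw [← Equiv.tsum_eq (Fin.consEquiv (fun _ => V)) (fun a => ∏ i, p (a i))]
      rw [ENNReal.tsum_prod']
      have : ∀ (v : V) (a : Fin r → V),
          (∏ i, p ((Fin.consEquiv (fun _ => V)) (v, a) i)) = p v * ∏ i, p (a i) := by
        intro v a
        rw [Fin.prod_univ_succ]
        simp [Fin.consEquiv]
      calc ∑' (v : V) (a : Fin r → V), ∏ i, p ((Fin.consEquiv (fun _ => V)) (v, a) i)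
          = ∑' (v : V) (a : Fin r → V), p v * ∏ i, p (a i) := by
            exact tsum_congr fun v => tsum_congr fun a => this v a
        _ = ∑' (v : V), p v * ∑' a : Fin r → V, ∏ i, p (a i) := by
            exact tsum_congr fun v => ENNReal.tsum_mul_left
        _ = 1 := by rw [ih]; simpa using hsum

lemma qc_le_one (p : V → ℝ≥0∞) (hsum : ∑' x, p x = 1) (r : ℕ) (z : V) :
    qc p r z ≤ 1 := by
  rw [← qc_prod_total p hsum r]
  exact ENNReal.tsum_le_tsum (fun a => by split <;> simp)

/-- group terms by the value of the total sum -/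
lemma tsum_group (p : V → ℝ≥0∞) (r : ℕ) (F : V → ℝ≥0∞) :
    ∑' a : Fin r → V, (∏ i, p (a i)) * F (∑ i, a i) = ∑' y, qc p r y * F y := by
  have : ∀ y, qc p r y * F y
      = ∑' a : Fin r → V, (if (∑ i, a i) = y then ∏ i, p (a i) else 0) * F y := by
    intro y; rw [qc, ENNReal.tsum_mul_right]
  rw [tsum_congr this, ENNReal.tsum_comm]
  refine tsum_congr fun a => ?_
  rw [tsum_eq_single (∑ i, a i) (fun y hy => by simp [Ne.symm hy])]
  simp

lemma qc_total (p : V → ℝ≥0∞) (hsum : ∑' x, p x = 1) (r : ℕ) :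
    ∑' y, qc p r y = 1 := by
  have := tsum_group p r (fun _ => 1)
  simpa [qc_prod_total p hsum r] using this.symm

lemma qc_le_one' (p : V → ℝ≥0∞) (hsum : ∑' x, p x = 1) (r : ℕ) (z : V) :
    qc p r z ≤ 1 := by
  rw [← qc_total p hsum r]; exact ENNReal.le_tsum z

lemma qc_one (p : V → ℝ≥0∞) (z : V) : qc p 1 z = p z := by
  rw [qc, ← Equiv.tsum_eq (Equiv.funUnique (Fin 1) V).symm]
  simp only [Equiv.funUnique_symm_apply]
  rw [tsum_eq_single z (fun b hb => by simp [hb])]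
  simp

lemma qc_conv (p : V → ℝ≥0∞) (r s : ℕ) (z : V) :
    qc p (r + s) z = ∑' y, qc p r y * qc p s (z - y) := by
  classical
  -- split (Fin (r+s) → V) ≃ (Fin r → V) × (Fin s → V)
  set e : (Fin r → V) × (Fin s → V) ≃ (Fin (r + s) → V) :=
    (Equiv.sumArrowEquivProdArrow (Fin r) (Fin s) V).symm.trans
      (Equiv.arrowCongr finSumFinEquiv (Equiv.refl V)) with he
  rw [qc, ← Equiv.tsum_eq e, ENNReal.tsum_prod']
  have key : ∀ (a : Fin r → V) (b : Fin s → V),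
      (∑ i, e (a, b) i) = (∑ i, a i) + (∑ i, b i) ∧
      (∏ i, p (e (a, b) i)) = (∏ i, p (a i)) * ∏ i, p (b i) := by
    intro a b
    have h1 : ∀ i, e (a, b) i = Sum.elim a b (finSumFinEquiv.symm i) := by
      intro i; simp [he, Equiv.sumArrowEquivProdArrow, Equiv.arrowCongr]
    constructor
    · rw [← Fintype.sum_equiv finSumFinEquiv (fun j => Sum.elim a b j)
        (fun i => e (a, b) i) (fun j => by simp only [h1]; simp)]
      simp [Fintype.sum_sum_type]
    · rw [← Fintype.prod_equiv finSumFinEquiv (fun j => p (Sum.elim a b j))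
        (fun i => p (e (a, b) i)) (fun j => by simp only [h1]; simp)]
      simp [Fintype.prod_sum_type]
  calc ∑' (a : Fin r → V) (b : Fin s → V),
        (if (∑ i, e (a, b) i) = z then ∏ i, p (e (a, b) i) else 0)
      = ∑' (a : Fin r → V), (∏ i, p (a i)) *
          ∑' (b : Fin s → V), (if (∑ i, b i) = z - (∑ i, a i) then ∏ i, p (b i) else 0) := by
        refine tsum_congr fun a => ?_
        rw [← ENNReal.tsum_mul_left]
        refine tsum_congr fun b => ?_
        rw [(key a b).1, (key a b).2]
        by_cases h : (∑ i, a i) + (∑ i, b i) = z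
        · rw [if_pos h, if_pos (by rw [← h]; abel)]
        · rw [if_neg h, if_neg (by intro hc; apply h; rw [hc]; abel), mul_zero]
    _ = ∑' (a : Fin r → V), (∏ i, p (a i)) * qc p s (z - ∑ i, a i) := rfl
    _ = ∑' y, qc p r y * qc p s (z - y) := tsum_group p r (fun y => qc p s (z - y))

lemma qc_neg (p : V → ℝ≥0∞) (hsymm : ∀ x, p (-x) = p x) (r : ℕ) (z : V) :
    qc p r (-z) = qc p r z := by
  rw [qc, ← Equiv.tsum_eq (Equiv.neg (Fin r → V))]
  refine (tsum_congr fun a => ?_).trans (rfl : qc p r z = qc p r z)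
  have h1 : (∑ i, (Equiv.neg (Fin r → V) a) i) = -∑ i, a i := by
    simp [Equiv.neg, Finset.sum_neg_distrib]
  have h2 : (∏ i, p ((Equiv.neg (Fin r → V) a) i)) = ∏ i, p (a i) := by
    refine Finset.prod_congr rfl fun i _ => ?_
    simp [Equiv.neg, hsymm]
  rw [h1, h2]
  exact if_congr neg_inj rfl rfl


end PascalAux

namespace PascalAux

variable {V : Type*} [AddCommGroup V] [DecidableEq V]

/-- autocorrelation -/
noncomputable def hh (g : V → ℝ≥0∞) (w : V) : ℝ≥0∞ := ∑' x, g x * g (x + w)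

lemma two_mul_mul_le (a b : ℝ≥0∞) : 2 * (a * b) ≤ a * a + b * b := by
  rcases eq_or_ne a ∞ with ha | ha
  · rw [ha]
    refine le_top.trans ?_
    simp
  rcases eq_or_ne b ∞ with hb | hb
  · rw [hb]
    refine le_top.trans ?_
    simp
  lift a to ℝ≥0 using ha
  lift b to ℝ≥0 using hb
  rw [← ENNReal.coe_mul, ← ENNReal.coe_mul, ← ENNReal.coe_mul, ← ENNReal.coe_ofNat,
    ← ENNReal.coe_mul, ← ENNReal.coe_add, ENNReal.coe_le_coe, ← NNReal.coe_le_coe]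
  push_cast
  nlinarith [sq_nonneg ((a : ℝ) - b)]

lemma sq_shift (g : V → ℝ≥0∞) (z : V) :
    ∑' x, g (x + z) * g (x + z) = ∑' x, g x * g x :=
  Equiv.tsum_eq (Equiv.addRight z) (fun x => g x * g x)

lemma cross_le (g : V → ℝ≥0∞) (z : V) :
    ∑' x, g x * g (x + z) ≤ ∑' x, g x * g x := by
  have h2 : (2 : ℝ≥0∞) * ∑' x, g x * g (x + z) ≤ 2 * ∑' x, g x * g x := by
    calc (2 : ℝ≥0∞) * ∑' x, g x * g (x + z) = ∑' x, 2 * (g x * g (x + z)) :=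
          ENNReal.tsum_mul_left.symm
      _ ≤ ∑' x, (g x * g x + g (x + z) * g (x + z)) :=
          ENNReal.tsum_le_tsum (fun x => two_mul_mul_le _ _)
      _ = (∑' x, g x * g x) + ∑' x, g (x + z) * g (x + z) := ENNReal.tsum_add
      _ = 2 * ∑' x, g x * g x := by rw [sq_shift, two_mul]
  exact (ENNReal.mul_le_mul_iff_right two_ne_zero ENNReal.ofNat_ne_top).mp h2

lemma hh_zero (g : V → ℝ≥0∞) : hh g 0 = ∑' x, g x * g x := by
  rw [hh]; exact tsum_congr fun x => by rw [add_zero]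

lemma hh_le (g : V → ℝ≥0∞) (w : V) : hh g w ≤ hh g 0 := by
  rw [hh_zero]; exact cross_le g w

lemma hh_even (g : V → ℝ≥0∞) (w : V) : hh g (-w) = hh g w := by
  rw [hh, hh, ← Equiv.tsum_eq (Equiv.addRight w) (fun x => g x * g (x + -w))]
  refine tsum_congr fun x => ?_
  simp [Equiv.coe_addRight, mul_comm]

lemma hh_shift (g : V → ℝ≥0∞) (c w : V) :
    ∑' x, g (x + c) * g (x + c + w) = hh g w := by
  rw [hh, ← Equiv.tsum_eq (Equiv.addRight c) (fun y => g y * g (y + w))]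
  rfl

/-- The pointwise AM-GM estimate. -/
lemma hh_amgm (g : V → ℝ≥0∞) (c z : V) :
    hh g (c - z) + hh g (c + z) + (hh g z + hh g z)
      ≤ (hh g c + hh g c) + (hh g 0 + hh g 0) := by
  have e1 : (∑' x, g x * g (x + z)) = hh g z := rfl
  have e2 : (∑' x, g x * g (x + z + c)) = hh g (z + c) := by
    rw [hh]; exact tsum_congr fun x => by rw [add_assoc]
  have e3 : (∑' x, g (x + c) * g (x + z)) = hh g (z - c) := by
    rw [← hh_shift g c (z - c)]
    exact tsum_congr fun x => by congr 1; abel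
  have e4 : (∑' x, g (x + c) * g (x + z + c)) = hh g z := by
    rw [← hh_shift g c z]
    exact tsum_congr fun x => by congr 1; abel
  have e0 : (∑' x, g x * g x) = hh g 0 := (hh_zero g).symm
  have e5 : (∑' x, g x * g (x + c)) = hh g c := rfl
  have e6 : (∑' x, g (x + c) * g (x + c)) = hh g 0 := by
    rw [sq_shift]; exact e0
  have e7 : (∑' x, g (x + c) * g x) = hh g c := by
    rw [← e5]; exact tsum_congr fun x => mul_comm _ _
  have expand1 : (∑' x, (g x + g (x + c)) * (g (x + z) + g (x + z + c)))
      = hh g z + hh g (z + c) + (hh g (z - c) + hh g z) := by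
    calc (∑' x, (g x + g (x + c)) * (g (x + z) + g (x + z + c)))
        = ∑' x, (g x * g (x + z) + g x * g (x + z + c)
            + (g (x + c) * g (x + z) + g (x + c) * g (x + z + c))) :=
          tsum_congr fun x => by ring
      _ = (∑' x, g x * g (x + z)) + (∑' x, g x * g (x + z + c))
            + ((∑' x, g (x + c) * g (x + z)) + (∑' x, g (x + c) * g (x + z + c))) := by
          rw [ENNReal.tsum_add, ENNReal.tsum_add, ENNReal.tsum_add]
      _ = hh g z + hh g (z + c) + (hh g (z - c) + hh g z) := by rw [e1, e2, e3, e4]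
  have expand2 : (∑' x, (g x + g (x + c)) * (g x + g (x + c)))
      = hh g 0 + hh g c + (hh g c + hh g 0) := by
    calc (∑' x, (g x + g (x + c)) * (g x + g (x + c)))
        = ∑' x, (g x * g x + g x * g (x + c)
            + (g (x + c) * g x + g (x + c) * g (x + c))) :=
          tsum_congr fun x => by ring
      _ = (∑' x, g x * g x) + (∑' x, g x * g (x + c))
            + ((∑' x, g (x + c) * g x) + (∑' x, g (x + c) * g (x + c))) := by
          rw [ENNReal.tsum_add, ENNReal.tsum_add, ENNReal.tsum_add]
      _ = hh g 0 + hh g c + (hh g c + hh g 0) := by rw [e0, e5, e6, e7]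
  have hle := cross_le (fun x => g x + g (x + c)) z
  rw [show (∑' x, (g x + g (x + c)) * ((fun x => g x + g (x + c)) (x + z)))
      = ∑' x, (g x + g (x + c)) * (g (x + z) + g (x + z + c)) from rfl] at hle
  rw [expand1, expand2] at hle
  calc hh g (c - z) + hh g (c + z) + (hh g z + hh g z)
      = hh g z + hh g (z + c) + (hh g (z - c) + hh g z) := by
        rw [show hh g (c - z) = hh g (z - c) by
            rw [show z - c = -(c - z) by abel, hh_even],
          show hh g (c + z) = hh g (z + c) by rw [add_comm]]
        abel
    _ ≤ hh g 0 + hh g c + (hh g c + hh g 0) := hle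
    _ = (hh g c + hh g c) + (hh g 0 + hh g 0) := by abel

end PascalAux

namespace PascalAux

variable {V : Type*} [AddCommGroup V] [DecidableEq V]

section key

variable (p : V → ℝ≥0∞) (hsum : ∑' x, p x = 1) (hsymm : ∀ x, p (-x) = p x)

include hsum hsymm in
/-- even convolution power as autocorrelation -/
lemma qc_even_eq (s : ℕ) (z : V) : qc p (s + s) z = hh (qc p s) z := by
  rw [qc_conv, hh]
  rw [← Equiv.tsum_eq (Equiv.addRight z) (fun y => qc p s y * qc p s (z - y))]
  refine tsum_congr fun x => ?_
  simp only [Equiv.coe_addRight]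
  rw [mul_comm]
  congr 1
  rw [show z - (x + z) = -x by abel, qc_neg p hsymm]

include hsum hsymm in
lemma qc_even_le (s : ℕ) (z : V) : qc p (s + s) z ≤ qc p (s + s) 0 := by
  rw [qc_even_eq p hsum hsymm, qc_even_eq p hsum hsymm]
  exact hh_le _ z

include hsum in
lemma hh_qc_le_one (s : ℕ) (w : V) : hh (qc p s) w ≤ 1 := by
  calc hh (qc p s) w ≤ ∑' x, qc p s x * 1 :=
        ENNReal.tsum_le_tsum fun x => mul_le_mul_right (qc_le_one' p hsum s _) _
    _ = 1 := by simpa using qc_total p hsum s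

variable (hhalf : 2⁻¹ ≤ p 0)

include hsum hsymm hhalf in
lemma qc_odd_le (s : ℕ) (z : V) : qc p (s + s + 1) z ≤ qc p (s + s + 1) 0 := by
  classical
  set g : V → ℝ≥0∞ := qc p s with hg
  have conv1 : ∀ w : V, qc p (s + s + 1) w = ∑' c, p c * hh g (c - w) := by
    intro w
    rw [qc_conv p (s + s) 1 w]
    rw [← Equiv.tsum_eq (Equiv.subLeft w) (fun y => qc p (s + s) y * qc p 1 (w - y))]
    refine tsum_congr fun c => ?_
    simp only [Equiv.subLeft_apply]
    rw [qc_one, show w - (w - c) = c by abel, mul_comm]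
    congr 1
    rw [qc_even_eq p hsum hsymm, show w - c = -(c - w) by abel, hh_even]
  set L : ℝ≥0∞ := ∑' c, if c = 0 then 0 else p c * hh g (c - z) with hL
  set R : ℝ≥0∞ := ∑' c, if c = 0 then 0 else p c * hh g c with hR
  set P1 : ℝ≥0∞ := ∑' c, if c = 0 then 0 else p c with hP1
  have hsplitz : qc p (s + s + 1) z = p 0 * hh g z + L := by
    rw [conv1 z, tsum_split_zero (fun c => p c * hh g (c - z))]
    congr 1
    rw [show (0 : V) - z = -z by abel, hh_even]
  have hsplit0 : qc p (s + s + 1) 0 = p 0 * hh g 0 + R := by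
    rw [conv1 0, tsum_split_zero (fun c => p c * hh g (c - 0))]
    congr 1
    · rw [show (0 : V) - 0 = 0 by abel]
    · rw [hR]
      exact tsum_congr fun c => by rw [show c - 0 = c by abel]
  have hfin : ∀ w, hh g w ≤ 1 := hh_qc_le_one p hsum s
  have hP1sum : P1 + p 0 = 1 := by
    rw [hP1, add_comm]
    exact (hsum ▸ tsum_split_zero p).symm
  have hp0top : p 0 ≠ ∞ := by
    intro h
    rw [h] at hP1sum
    simp at hP1sum
  have hP1p0 : P1 ≤ p 0 := by
    by_contra hcon
    push_neg at hcon
    have h1 : p 0 + p 0 < P1 + p 0 := ENNReal.add_lt_add_right hp0top hcon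
    rw [hP1sum] at h1
    have h2 : (1 : ℝ≥0∞) ≤ p 0 + p 0 := by
      calc (1 : ℝ≥0∞) = 2⁻¹ + 2⁻¹ := ENNReal.inv_two_add_inv_two.symm
        _ ≤ p 0 + p 0 := add_le_add hhalf hhalf
    exact absurd h1 (not_lt.mpr h2)
  have hP1le1 : P1 ≤ 1 := hP1sum ▸ le_self_add
  -- summed AM-GM inequality over c ≠ 0
  have tsum_ite_add : ∀ f₁ f₂ : V → ℝ≥0∞,
      (∑' c, if c = 0 then 0 else (f₁ c + f₂ c))
        = (∑' c, if c = 0 then 0 else f₁ c) + (∑' c, if c = 0 then 0 else f₂ c) := by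
    intro f₁ f₂
    rw [← ENNReal.tsum_add]
    exact tsum_congr fun c => by by_cases h : c = 0 <;> simp [h]
  have tsum_ite_const : ∀ K : ℝ≥0∞,
      (∑' c, if c = 0 then 0 else p c * K) = P1 * K := by
    intro K
    rw [hP1, ← ENNReal.tsum_mul_right]
    exact tsum_congr fun c => by by_cases h : c = 0 <;> simp [h]
  have hL2 : (∑' c, if c = 0 then 0 else p c * hh g (c + z)) = L := by
    rw [hL, ← Equiv.tsum_eq (Equiv.neg V) (fun c => if c = 0 then 0 else p c * hh g (c - z))]
    refine tsum_congr fun c => ?_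
    simp only [Equiv.neg_apply]
    by_cases h : c = 0
    · simp [h]
    · rw [if_neg h, if_neg (by simpa using h)]
      rw [hsymm, show -c - z = -(c + z) by abel, hh_even]
  have big : L + L + (P1 * hh g z + P1 * hh g z)
      ≤ R + R + (P1 * hh g 0 + P1 * hh g 0) := by
    have point : ∀ c : V,
        (if c = 0 then 0 else p c * (hh g (c - z) + hh g (c + z) + (hh g z + hh g z)))
          ≤ (if c = 0 then 0 else p c * ((hh g c + hh g c) + (hh g 0 + hh g 0))) := by
      intro c
      by_cases h : c = 0
      · simp [h]
      · rw [if_neg h, if_neg h]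
        exact mul_le_mul_right (hh_amgm g c z) _
    have bigsum := ENNReal.tsum_le_tsum point
    have lhs_eq : (∑' c, if c = 0 then 0 else
        p c * (hh g (c - z) + hh g (c + z) + (hh g z + hh g z)))
        = L + L + (P1 * hh g z + P1 * hh g z) := by
      have : ∀ c : V, (if c = 0 then 0 else
          p c * (hh g (c - z) + hh g (c + z) + (hh g z + hh g z)))
          = (if c = 0 then 0 else (p c * hh g (c - z) + p c * hh g (c + z)))
            + (if c = 0 then 0 else (p c * hh g z + p c * hh g z)) := by
        intro c; by_cases h : c = 0 <;> simp [h] <;> ring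
      rw [tsum_congr this, ENNReal.tsum_add, tsum_ite_add, tsum_ite_add, ← hL, hL2,
        tsum_ite_const]
    have rhs_eq : (∑' c, if c = 0 then 0 else
        p c * ((hh g c + hh g c) + (hh g 0 + hh g 0)))
        = R + R + (P1 * hh g 0 + P1 * hh g 0) := by
      have : ∀ c : V, (if c = 0 then 0 else
          p c * ((hh g c + hh g c) + (hh g 0 + hh g 0)))
          = (if c = 0 then 0 else (p c * hh g c + p c * hh g c))
            + (if c = 0 then 0 else (p c * hh g 0 + p c * hh g 0)) := by
        intro c; by_cases h : c = 0 <;> simp [h] <;> ring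
      rw [tsum_congr this, ENNReal.tsum_add, tsum_ite_add, tsum_ite_add, ← hR,
        tsum_ite_const]
    rw [lhs_eq, rhs_eq] at bigsum
    exact bigsum
  have halfineq : L + P1 * hh g z ≤ R + P1 * hh g 0 := by
    have h2 : (2 : ℝ≥0∞) * (L + P1 * hh g z) ≤ 2 * (R + P1 * hh g 0) := by
      calc (2 : ℝ≥0∞) * (L + P1 * hh g z)
          = L + L + (P1 * hh g z + P1 * hh g z) := by ring
        _ ≤ R + R + (P1 * hh g 0 + P1 * hh g 0) := big
        _ = 2 * (R + P1 * hh g 0) := by ring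
    exact (ENNReal.mul_le_mul_iff_right two_ne_zero ENNReal.ofNat_ne_top).mp h2
  have key2 : p 0 * hh g z + P1 * hh g 0 ≤ p 0 * hh g 0 + P1 * hh g z := by
    set D : ℝ≥0∞ := p 0 - P1 with hDdef
    have hD : P1 + D = p 0 := by rw [hDdef]; exact add_tsub_cancel_of_le hP1p0
    rw [← hD]
    have hDz : D * hh g z ≤ D * hh g 0 := mul_le_mul_right (hh_le g z) D
    calc (P1 + D) * hh g z + P1 * hh g 0
        = P1 * hh g 0 + P1 * hh g z + D * hh g z := by ring
      _ ≤ P1 * hh g 0 + P1 * hh g z + D * hh g 0 := add_le_add_right hDz _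
      _ = (P1 + D) * hh g 0 + P1 * hh g z := by ring
  have hfinP : P1 * hh g z ≠ ∞ :=
    ne_top_of_le_ne_top ENNReal.one_ne_top (mul_le_one' hP1le1 (hfin z))
  rw [hsplitz, hsplit0]
  refine (ENNReal.add_le_add_iff_right hfinP).mp ?_
  calc p 0 * hh g z + L + P1 * hh g z
      = p 0 * hh g z + (L + P1 * hh g z) := by ring
    _ ≤ p 0 * hh g z + (R + P1 * hh g 0) := add_le_add_right halfineq _
    _ = (p 0 * hh g z + P1 * hh g 0) + R := by ring
    _ ≤ (p 0 * hh g 0 + P1 * hh g z) + R := add_le_add_left key2 _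
    _ = p 0 * hh g 0 + R + P1 * hh g z := by ring

include hsum hsymm hhalf in
/-- Key analytic estimate: `q_r(z) ≤ q_r(0)`. -/
lemma qc_key (r : ℕ) (z : V) : qc p r z ≤ qc p r 0 := by
  rcases Nat.even_or_odd r with ⟨s, hs⟩ | ⟨s, hs⟩
  · subst hs; exact qc_even_le p hsum hsymm s z
  · rw [show r = s + s + 1 by omega]
    exact qc_odd_le p hsum hsymm hhalf s z

end key

end PascalAux

namespace PascalAux

open MeasureTheory ProbabilityTheory

section meas

variable {V : Type*} [AddCommGroup V] [DecidableEq V] [Countable V]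
  [MeasurableSpace V] [MeasurableSingletonClass V]
variable {Ω : Type*} [MeasurableSpace Ω] (μ : Measure Ω) [IsProbabilityMeasure μ]
variable (ξ : ℕ → Ω → V) (p : V → ℝ≥0∞)

lemma msAll {W : Type*} [Countable W] [MeasurableSpace W] [MeasurableSingletonClass W]
    (s : Set W) : MeasurableSet s :=
  s.to_countable.measurableSet

variable (hmeas : ∀ i, Measurable (ξ i))
variable (hindep : iIndepFun ξ μ)
variable (hlaw : ∀ i (x : V), μ {ω | ξ i ω = x} = p x)

include hmeas in
lemma sum_meas (t : Finset ℕ) : Measurable (fun ω => ∑ i ∈ t, ξ i ω) := by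
  haveI : MeasurableAdd₂ V := ⟨measurable_of_countable _⟩
  exact Finset.measurable_sum t fun i _ => hmeas i

include hindep hlaw in
lemma meas_cyl (t : Finset ℕ) (g : ℕ → V) :
    μ (⋂ i ∈ t, {ω | ξ i ω = g i}) = ∏ i ∈ t, p (g i) := by
  have h := hindep.meas_biInter (S := t) (s := fun i => (ξ i) ⁻¹' {g i})
    (fun i _ => ⟨{g i}, msAll _, rfl⟩)
  have hpre : ∀ i : ℕ, (ξ i) ⁻¹' {g i} = {ω | ξ i ω = g i} := by
    intro i; ext ω; simp
  calc μ (⋂ i ∈ t, {ω | ξ i ω = g i}) = μ (⋂ i ∈ t, (ξ i) ⁻¹' {g i}) := by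
        simp_rw [hpre]
    _ = ∏ i ∈ t, μ ((ξ i) ⁻¹' {g i}) := h
    _ = ∏ i ∈ t, p (g i) := by
        refine Finset.prod_congr rfl fun i _ => ?_
        rw [hpre]; exact hlaw i (g i)

include hmeas hindep hlaw in
lemma meas_block (t : Finset ℕ) (z : V) :
    μ {ω | (∑ i ∈ t, ξ i ω) = z} = qc p t.card z := by
  classical
  set X : Ω → (↥t → V) := fun ω i => ξ ↑i ω with hX
  set A : Set (↥t → V) := {v | (∑ i : ↥t, v i) = z} with hA
  have hXmeas : Measurable X := measurable_pi_lambda _ (fun i => hmeas ↑i)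
  have hev : {ω | (∑ i ∈ t, ξ i ω) = z} = X ⁻¹' A := by
    ext ω
    simp only [Set.mem_setOf_eq, Set.mem_preimage, hX, hA, Set.mem_setOf_eq]
    rw [Finset.sum_coe_sort t (fun i => ξ i ω)]
  have hfib : ∀ v : ↥t → V, μ (X ⁻¹' {v}) = ∏ i : ↥t, p (v i) := by
    intro v
    set g : ℕ → V := fun j => if h : j ∈ t then v ⟨j, h⟩ else 0 with hg
    have : X ⁻¹' {v} = ⋂ i ∈ t, {ω | ξ i ω = g i} := by
      ext ω
      simp only [Set.mem_preimage, Set.mem_singleton_iff, Set.mem_iInter, Set.mem_setOf_eq, hX]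
      constructor
      · intro hv i hi
        rw [hg]; simp only [hi, dif_pos]
        exact congrFun hv ⟨i, hi⟩
      · intro hv
        funext i
        have := hv ↑i i.2
        rw [hg] at this; simpa [i.2] using this
    rw [this, meas_cyl μ ξ p hindep hlaw t g]
    rw [← Finset.prod_coe_sort t (fun i => p (g i))]
    refine Finset.prod_congr rfl fun i _ => ?_
    rw [hg]; simp [i.2]
  have hsplit : X ⁻¹' A = ⋃ v ∈ A, X ⁻¹' {v} := by
    ext ω; simp
  rw [hev, hsplit, measure_biUnion (Set.to_countable A)
    (fun v _ w _ hvw => Set.disjoint_left.mpr (fun ω h1 h2 => hvw (by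
      have e1 : X ω = v := h1
      have e2 : X ω = w := h2
      rw [← e1, e2])))
    (fun v _ => hXmeas (msAll {v}))]
  rw [tsum_subtype A (fun v => μ (X ⁻¹' {v}))]
  calc ∑' v : ↥t → V, A.indicator (fun v => μ (X ⁻¹' {v})) v
      = ∑' v : ↥t → V, (if (∑ i : ↥t, v i) = z then ∏ i : ↥t, p (v i) else 0) := by
        refine tsum_congr fun v => ?_
        rw [Set.indicator_apply]
        by_cases hv : v ∈ A
        · rw [if_pos hv, if_pos (by exact hv), hfib]
        · rw [if_neg hv, if_neg (by exact hv)]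
    _ = qc p t.card z := by
        rw [qc, ← Equiv.tsum_eq (Equiv.arrowCongr t.equivFin (Equiv.refl V))
          (fun a => if (∑ i, a i) = z then ∏ i, p (a i) else 0)]
        refine tsum_congr fun v => ?_
        have hs : (∑ i : Fin t.card, ((Equiv.arrowCongr t.equivFin (Equiv.refl V)) v) i)
            = ∑ i : ↥t, v i := by
          rw [← Equiv.sum_comp t.equivFin
            (fun j => ((Equiv.arrowCongr t.equivFin (Equiv.refl V)) v) j)]
          exact Finset.sum_congr rfl fun i _ => by simp [Equiv.arrowCongr]
        have hp : (∏ i : Fin t.card, p (((Equiv.arrowCongr t.equivFin (Equiv.refl V)) v) i))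
            = ∏ i : ↥t, p (v i) := by
          rw [← Equiv.prod_comp t.equivFin
            (fun j => p (((Equiv.arrowCongr t.equivFin (Equiv.refl V)) v) j))]
          exact Finset.prod_congr rfl fun i _ => by simp [Equiv.arrowCongr]
        rw [hs, hp]

include hmeas hindep hlaw in
lemma meas_factor (s t : Finset ℕ) (hst : Disjoint s t) (A : Set (↥s → V)) (z : V) :
    μ ({ω | (fun i : ↥s => ξ ↑i ω) ∈ A} ∩ {ω | (∑ i ∈ t, ξ i ω) = z})
      = μ {ω | (fun i : ↥s => ξ ↑i ω) ∈ A} * qc p t.card z := by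
  have hind := hindep.indepFun_finset s t hst hmeas
  have h2 : {ω | (∑ i ∈ t, ξ i ω) = z}
      = (fun ω (i : ↥t) => ξ ↑i ω) ⁻¹' {v | (∑ i : ↥t, v i) = z} := by
    ext ω
    simp only [Set.mem_setOf_eq, Set.mem_preimage]
    rw [Finset.sum_coe_sort t (fun i => ξ i ω)]
  have h1 : {ω | (fun i : ↥s => ξ ↑i ω) ∈ A} = (fun ω (i : ↥s) => ξ ↑i ω) ⁻¹' A := rfl
  rw [h1, h2, hind.measure_inter_preimage_eq_mul A _ (msAll A) (msAll _), ← h2,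
    meas_block μ ξ p hmeas hindep hlaw t z, ← h1]

end meas

end PascalAux

namespace PascalAux

open MeasureTheory ProbabilityTheory

section ident

variable {V : Type*} [AddCommGroup V] [DecidableEq V] [Countable V]
  [MeasurableSpace V] [MeasurableSingletonClass V]
variable {Ω : Type*} [MeasurableSpace Ω] (μ : Measure Ω) [IsProbabilityMeasure μ]
variable (ξ : ℕ → Ω → V) (p : V → ℝ≥0∞)
variable (hmeas : ∀ i, Measurable (ξ i))
variable (hindep : iIndepFun ξ μ)
variable (hlaw : ∀ i (x : V), μ {ω | ξ i ω = x} = p x)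

lemma restrictA (k j : ℕ) (f : ℕ → V) :
    (∑ i : ↥(Finset.range k), (if j ≤ ↑i then f ↑i else 0)) = ∑ i ∈ Finset.Ico j k, f i := by
  rw [Finset.sum_coe_sort (Finset.range k) (fun i => if j ≤ i then f i else 0),
    ← Finset.sum_filter]
  congr 1
  ext i
  simp only [Finset.mem_filter, Finset.mem_range, Finset.mem_Ico]
  omega

lemma restrictB (m n' j : ℕ) (hj : j ≤ n') (f : ℕ → V) :
    (∑ i : ↥(Finset.Ico m n'), (if ↑i < j then f ↑i else 0)) = ∑ i ∈ Finset.Ico m j, f i := by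
  rw [Finset.sum_coe_sort (Finset.Ico m n') (fun i => if i < j then f i else 0),
    ← Finset.sum_filter]
  congr 1
  ext i
  simp only [Finset.mem_filter, Finset.mem_Ico]
  omega

include hmeas in
lemma measSumEq (t : Finset ℕ) (z : V) :
    MeasurableSet {ω | (∑ i ∈ t, ξ i ω) = z} := by
  have : {ω | (∑ i ∈ t, ξ i ω) = z} = (fun ω => ∑ i ∈ t, ξ i ω) ⁻¹' {z} := by
    ext ω; simp
  rw [this]
  exact (sum_meas ξ hmeas t) (msAll {z})

include hmeas in
lemma measFr (ψ : ℕ → V) (k : ℕ) :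
    MeasurableSet {ω | ∀ j < k, (∑ i ∈ Finset.Ico j k, ξ i ω) ≠ ψ k - ψ j} := by
  have : {ω | ∀ j < k, (∑ i ∈ Finset.Ico j k, ξ i ω) ≠ ψ k - ψ j}
      = ⋂ j ∈ Finset.range k, {ω | (∑ i ∈ Finset.Ico j k, ξ i ω) = ψ k - ψ j}ᶜ := by
    ext ω; simp [Finset.mem_range]
  rw [this]
  exact MeasurableSet.biInter (Finset.range k).countable_toSet
    (fun j _ => (measSumEq ξ hmeas _ _).compl)

include hmeas in
lemma measTl (ψ : ℕ → V) (n k : ℕ) :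
    MeasurableSet {ω | ∀ m ≤ n, k < m → (∑ i ∈ Finset.Ico k m, ξ i ω) ≠ ψ m - ψ k} := by
  have : {ω | ∀ m ≤ n, k < m → (∑ i ∈ Finset.Ico k m, ξ i ω) ≠ ψ m - ψ k}
      = ⋂ m ∈ Finset.Ioc k n, {ω | (∑ i ∈ Finset.Ico k m, ξ i ω) = ψ m - ψ k}ᶜ := by
    ext ω
    simp only [Set.mem_setOf_eq, Set.mem_iInter, Finset.mem_Ioc, Set.mem_compl_iff]
    constructor
    · rintro h m ⟨h1, h2⟩; exact h m h2 h1
    · intro h m h1 h2; exact h m ⟨h2, h1⟩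
  rw [this]
  exact MeasurableSet.biInter (Finset.Ioc k n).countable_toSet
    (fun j _ => (measSumEq ξ hmeas _ _).compl)

include hmeas hindep hlaw in
lemma identA (ψ : ℕ → V) (m : ℕ) :
    μ {ω | ∀ k < m, (∑ i ∈ Finset.Ico k m, ξ i ω) ≠ ψ m - ψ k}
      + ∑ k ∈ Finset.range m, qc p (m - k) (ψ m - ψ k)
        * μ {ω | ∀ j < k, (∑ i ∈ Finset.Ico j k, ξ i ω) ≠ ψ k - ψ j} = 1 := by
  classical
  set Fr : ℕ → Set Ω :=
    fun k => {ω | ∀ j < k, (∑ i ∈ Finset.Ico j k, ξ i ω) ≠ ψ k - ψ j} with hFr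
  set E : ℕ → Set Ω :=
    fun k => {ω | (∑ i ∈ Finset.Ico k m, ξ i ω) = ψ m - ψ k} ∩ Fr k with hE
  have hFrmeas : ∀ k, MeasurableSet (Fr k) := fun k => measFr ξ hmeas ψ k
  have hEmeas : ∀ k, MeasurableSet (E k) :=
    fun k => (measSumEq ξ hmeas _ _).inter (hFrmeas k)
  have cover : (Fr m)ᶜ = ⋃ k ∈ Finset.range m, E k := by
    ext ω
    simp only [Set.mem_compl_iff, hFr, Set.mem_setOf_eq, Set.mem_iUnion, hE,
      Set.mem_inter_iff, Finset.mem_range, exists_prop, not_forall, not_not]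
    constructor
    · rintro ⟨j, hj, hEq⟩
      have hex : ∃ k, k < m ∧ (∑ i ∈ Finset.Ico k m, ξ i ω) = ψ m - ψ k := ⟨j, hj, hEq⟩
      have hex' : ∃ k, k < m ∧ (∑ i ∈ Finset.Ico k m, ξ i ω) = ψ m - ψ k := hex
      refine ⟨Nat.find hex', (Nat.find_spec hex').1, (Nat.find_spec hex').2, ?_⟩
      intro j' hj' hcontra
      have hP : j' < m ∧ (∑ i ∈ Finset.Ico j' m, ξ i ω) = ψ m - ψ j' := by
        refine ⟨lt_trans hj' (Nat.find_spec hex').1, ?_⟩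
        rw [← Finset.sum_Ico_consecutive (fun i => ξ i ω) (le_of_lt hj')
          (le_of_lt (Nat.find_spec hex').1), hcontra, (Nat.find_spec hex').2]
        abel
      exact absurd hP (Nat.find_min hex' hj')
    · rintro ⟨k, hk, hEq, -⟩
      exact ⟨k, hk, hEq⟩
  have key : ∀ a b, a ∈ (↑(Finset.range m) : Set ℕ) → b ∈ (↑(Finset.range m) : Set ℕ) →
      a < b → Disjoint (E a) (E b) := by
    intro a b ha hb hlt
    refine Set.disjoint_left.mpr fun ω hA hB => ?_
    have hbm : b < m := by simpa using hb
    have h1 : (∑ i ∈ Finset.Ico a m, ξ i ω) = ψ m - ψ a := hA.1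
    have h2 : (∑ i ∈ Finset.Ico b m, ξ i ω) = ψ m - ψ b := hB.1
    refine hB.2 a hlt ?_
    have hsplit : (∑ i ∈ Finset.Ico a b, ξ i ω) + (∑ i ∈ Finset.Ico b m, ξ i ω)
        = ∑ i ∈ Finset.Ico a m, ξ i ω :=
      Finset.sum_Ico_consecutive _ (le_of_lt hlt) (le_of_lt hbm)
    have heq : (∑ i ∈ Finset.Ico a b, ξ i ω) + (ψ m - ψ b) = ψ m - ψ a := by
      rw [← h2, hsplit, h1]
    have := eq_sub_of_add_eq heq
    rw [this]
    abel
  have disj : (↑(Finset.range m) : Set ℕ).PairwiseDisjoint E := by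
    intro a ha b hb hab
    rcases lt_or_gt_of_ne hab with h | h
    · exact key a b ha hb h
    · exact (key b a hb ha h).symm
  have hμE : ∀ k ∈ Finset.range m, μ (E k) = qc p (m - k) (ψ m - ψ k) * μ (Fr k) := by
    intro k hk
    set A : Set (↥(Finset.range k) → V) :=
      {v | ∀ j < k, (∑ i : ↥(Finset.range k), (if j ≤ ↑i then v i else 0)) ≠ ψ k - ψ j}
      with hA
    have hFrA : Fr k = {ω | (fun i : ↥(Finset.range k) => ξ ↑i ω) ∈ A} := by
      ext ω
      have hr : ∀ j, (∑ i : ↥(Finset.range k), (if j ≤ ↑i then ξ ↑i ω else 0))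
          = ∑ i ∈ Finset.Ico j k, ξ i ω := fun j => restrictA k j (fun l => ξ l ω)
      simp only [hFr, hA, Set.mem_setOf_eq]
      constructor
      · intro h j hj
        rw [hr j]
        exact h j hj
      · intro h j hj
        have h2 := h j hj
        rwa [hr j] at h2
    have hdisj : Disjoint (Finset.range k) (Finset.Ico k m) := by
      rw [Finset.disjoint_left]
      intro i hi hi2
      simp only [Finset.mem_range] at hi
      simp only [Finset.mem_Ico] at hi2
      omega
    have hfac := meas_factor μ ξ p hmeas hindep hlaw (Finset.range k) (Finset.Ico k m)
      hdisj A (ψ m - ψ k)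
    rw [hE]
    simp only
    rw [Set.inter_comm, hFrA, hfac, Nat.card_Ico, mul_comm]
  have hbase : μ (Fr m) + μ ((Fr m)ᶜ) = 1 := by
    rw [measure_add_measure_compl (hFrmeas m), measure_univ]
  rw [cover, measure_biUnion_finset disj (fun k _ => hEmeas k),
    Finset.sum_congr rfl hμE] at hbase
  exact hbase

include hmeas hindep hlaw in
lemma identB (ψ : ℕ → V) (n k : ℕ) (hk : k ≤ n) :
    μ {ω | ∀ m ≤ n, k < m → (∑ i ∈ Finset.Ico k m, ξ i ω) ≠ ψ m - ψ k}
      + ∑ m ∈ Finset.Ioc k n, qc p (m - k) (ψ m - ψ k)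
        * μ {ω | ∀ j ≤ n, m < j → (∑ i ∈ Finset.Ico m j, ξ i ω) ≠ ψ j - ψ m} = 1 := by
  classical
  set Tl : ℕ → Set Ω :=
    fun m => {ω | ∀ j ≤ n, m < j → (∑ i ∈ Finset.Ico m j, ξ i ω) ≠ ψ j - ψ m} with hTl
  set E : ℕ → Set Ω :=
    fun m => {ω | (∑ i ∈ Finset.Ico k m, ξ i ω) = ψ m - ψ k} ∩ Tl m with hE
  have hTlmeas : ∀ m, MeasurableSet (Tl m) := fun m => measTl ξ hmeas ψ n m
  have hEmeas : ∀ m, MeasurableSet (E m) :=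
    fun m => (measSumEq ξ hmeas _ _).inter (hTlmeas m)
  have cover : (Tl k)ᶜ = ⋃ m ∈ Finset.Ioc k n, E m := by
    ext ω
    simp only [Set.mem_compl_iff, hTl, Set.mem_setOf_eq, Set.mem_iUnion, hE,
      Set.mem_inter_iff, Finset.mem_Ioc, exists_prop, not_forall, not_not]
    constructor
    · rintro ⟨j, hj, hkj, hEq⟩
      set P : ℕ → Prop := fun m => k < m ∧ (∑ i ∈ Finset.Ico k m, ξ i ω) = ψ m - ψ k with hP
      have hPj : P j := ⟨hkj, hEq⟩
      have hspec : P (Nat.findGreatest P n) := Nat.findGreatest_spec hj hPj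
      have hle : Nat.findGreatest P n ≤ n := Nat.findGreatest_le n
      refine ⟨Nat.findGreatest P n, ⟨hspec.1, hle⟩, hspec.2, ?_⟩
      intro j' hj' hgt hcontra
      have hPj' : P j' := by
        refine ⟨lt_trans hspec.1 hgt, ?_⟩
        rw [← Finset.sum_Ico_consecutive (fun i => ξ i ω) (le_of_lt hspec.1)
          (le_of_lt hgt), hcontra, hspec.2]
        abel
      exact Nat.findGreatest_is_greatest hgt hj' hPj'
    · rintro ⟨m, ⟨hkm, hmn⟩, hEq, -⟩
      exact ⟨m, hmn, hkm, hEq⟩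
  have key : ∀ a b, a ∈ (↑(Finset.Ioc k n) : Set ℕ) → b ∈ (↑(Finset.Ioc k n) : Set ℕ) →
      a < b → Disjoint (E a) (E b) := by
    intro a b ha hb hlt
    refine Set.disjoint_left.mpr fun ω hA hB => ?_
    have hbn : b ≤ n := by simp only [Finset.coe_Ioc, Set.mem_Ioc] at hb; exact hb.2
    have hka : k < a := by simp only [Finset.coe_Ioc, Set.mem_Ioc] at ha; exact ha.1
    have h1 : (∑ i ∈ Finset.Ico k a, ξ i ω) = ψ a - ψ k := hA.1
    have h2 : (∑ i ∈ Finset.Ico k b, ξ i ω) = ψ b - ψ k := hB.1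
    refine hA.2 b hbn hlt ?_
    have hsplit : (∑ i ∈ Finset.Ico k a, ξ i ω) + (∑ i ∈ Finset.Ico a b, ξ i ω)
        = ∑ i ∈ Finset.Ico k b, ξ i ω :=
      Finset.sum_Ico_consecutive _ (le_of_lt hka) (le_of_lt hlt)
    have heq : (ψ a - ψ k) + (∑ i ∈ Finset.Ico a b, ξ i ω) = ψ b - ψ k := by
      rw [← h1, hsplit, h2]
    have : (∑ i ∈ Finset.Ico a b, ξ i ω) = (ψ b - ψ k) - (ψ a - ψ k) := by
      rw [← heq]; abel
    rw [this]; abel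
  have disj : (↑(Finset.Ioc k n) : Set ℕ).PairwiseDisjoint E := by
    intro a ha b hb hab
    rcases lt_or_gt_of_ne hab with h | h
    · exact key a b ha hb h
    · exact (key b a hb ha h).symm
  have hμE : ∀ m ∈ Finset.Ioc k n, μ (E m) = qc p (m - k) (ψ m - ψ k) * μ (Tl m) := by
    intro m hm
    obtain ⟨hkm, hmn⟩ := Finset.mem_Ioc.mp hm
    set A : Set (↥(Finset.Ico m n) → V) :=
      {v | ∀ j ≤ n, m < j →
        (∑ i : ↥(Finset.Ico m n), (if ↑i < j then v i else 0)) ≠ ψ j - ψ m} with hA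
    have hTlA : Tl m = {ω | (fun i : ↥(Finset.Ico m n) => ξ ↑i ω) ∈ A} := by
      ext ω
      have hr : ∀ j, j ≤ n → (∑ i : ↥(Finset.Ico m n), (if ↑i < j then ξ ↑i ω else 0))
          = ∑ i ∈ Finset.Ico m j, ξ i ω := fun j hj => restrictB m n j hj (fun l => ξ l ω)
      simp only [hTl, hA, Set.mem_setOf_eq]
      constructor
      · intro h j hj hmj
        rw [hr j hj]
        exact h j hj hmj
      · intro h j hj hmj
        have h2 := h j hj hmj
        rwa [hr j hj] at h2
    have hdisj : Disjoint (Finset.Ico m n) (Finset.Ico k m) := by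
      rw [Finset.disjoint_left]
      intro i hi hi2
      simp only [Finset.mem_Ico] at hi hi2
      omega
    have hfac := meas_factor μ ξ p hmeas hindep hlaw (Finset.Ico m n) (Finset.Ico k m)
      hdisj A (ψ m - ψ k)
    rw [hE]
    simp only
    rw [Set.inter_comm, hTlA, hfac, Nat.card_Ico, mul_comm]
  have hbase : μ (Tl k) + μ ((Tl k)ᶜ) = 1 := by
    rw [measure_add_measure_compl (hTlmeas k), measure_univ]
  rw [cover, measure_biUnion_finset disj (fun m _ => hEmeas m),
    Finset.sum_congr rfl hμE] at hbase
  exact hbase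

end ident

end PascalAux

namespace PascalAux

open MeasureTheory ProbabilityTheory

section count

variable {V : Type*} [AddCommGroup V] [DecidableEq V] [Countable V]
  [MeasurableSpace V] [MeasurableSingletonClass V]
variable {Ω : Type*} [MeasurableSpace Ω] (μ : Measure Ω) [IsProbabilityMeasure μ]
variable (ξ : ℕ → Ω → V)
variable (hmeas : ∀ i, Measurable (ξ i))

include hmeas in
/-- first-hitting decomposition of the summed capture probability. -/
lemma tsum_firsthit (ψ : ℕ → V) (n : ℕ) :
    ∑' x : V, μ {ω | ∃ m ≤ n, x + (∑ i ∈ Finset.range m, ξ i ω) = ψ m}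
      = ∑ m ∈ Finset.range (n + 1),
          μ {ω | ∀ k < m, (∑ i ∈ Finset.Ico k m, ξ i ω) ≠ ψ m - ψ k} := by
  classical
  set G : ℕ → Set Ω :=
    fun m => {ω | ∀ k < m, (∑ i ∈ Finset.Ico k m, ξ i ω) ≠ ψ m - ψ k} with hG
  set FH : ℕ → V → Set Ω :=
    fun m x => {ω | (∑ i ∈ Finset.range m, ξ i ω) = ψ m - x} ∩ G m with hFH
  have hGmeas : ∀ m, MeasurableSet (G m) := fun m => measFr ξ hmeas ψ m
  have hFHmeas : ∀ m x, MeasurableSet (FH m x) :=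
    fun m x => (measSumEq ξ hmeas _ _).inter (hGmeas m)
  have hdecomp : ∀ x : V, {ω | ∃ m ≤ n, x + (∑ i ∈ Finset.range m, ξ i ω) = ψ m}
      = ⋃ m ∈ Finset.range (n + 1), FH m x := by
    intro x
    ext ω
    simp only [Set.mem_setOf_eq, Set.mem_iUnion, hFH, Set.mem_inter_iff, hG,
      Finset.mem_range, exists_prop, Nat.lt_succ_iff]
    constructor
    · rintro ⟨m, hm, hEq⟩
      have hex : ∃ m', m' ≤ n ∧ x + (∑ i ∈ Finset.range m', ξ i ω) = ψ m' := ⟨m, hm, hEq⟩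
      refine ⟨Nat.find hex, (Nat.find_spec hex).1, ?_, ?_⟩
      · have := (Nat.find_spec hex).2
        rw [← this]; abel
      · intro k hk hcontra
        have hkn : k ≤ n := le_trans (le_of_lt hk) (Nat.find_spec hex).1
        have hsplit : (∑ i ∈ Finset.range k, ξ i ω) + (∑ i ∈ Finset.Ico k (Nat.find hex), ξ i ω)
            = ∑ i ∈ Finset.range (Nat.find hex), ξ i ω :=
          Finset.sum_range_add_sum_Ico _ (le_of_lt hk)
        have hPk : k ≤ n ∧ x + (∑ i ∈ Finset.range k, ξ i ω) = ψ k := by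
          refine ⟨hkn, ?_⟩
          have h1 := (Nat.find_spec hex).2
          have : x + ((∑ i ∈ Finset.range k, ξ i ω) + (∑ i ∈ Finset.Ico k (Nat.find hex), ξ i ω))
              = ψ (Nat.find hex) := by rw [hsplit]; exact h1
          rw [hcontra] at this
          have h4 : (x + ∑ i ∈ Finset.range k, ξ i ω)
              + (ψ (Nat.find hex) - ψ k) = ψ (Nat.find hex) := by
            rw [add_assoc]; exact this
          rw [eq_sub_of_add_eq h4]; abel
        exact absurd hPk (Nat.find_min hex hk)
    · rintro ⟨m, hm, hEq, -⟩
      refine ⟨m, hm, ?_⟩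
      rw [hEq]; abel
  have hdisj : ∀ x : V, (↑(Finset.range (n + 1)) : Set ℕ).PairwiseDisjoint (fun m => FH m x) := by
    intro x
    have key : ∀ a b, a < b → Disjoint (FH a x) (FH b x) := by
      intro a b hlt
      refine Set.disjoint_left.mpr fun ω hA hB => ?_
      have h1 : (∑ i ∈ Finset.range a, ξ i ω) = ψ a - x := hA.1
      have h2 : (∑ i ∈ Finset.range b, ξ i ω) = ψ b - x := hB.1
      refine hB.2 a hlt ?_
      have hsplit : (∑ i ∈ Finset.range a, ξ i ω) + (∑ i ∈ Finset.Ico a b, ξ i ω)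
          = ∑ i ∈ Finset.range b, ξ i ω :=
        Finset.sum_range_add_sum_Ico _ (le_of_lt hlt)
      have : (ψ a - x) + (∑ i ∈ Finset.Ico a b, ξ i ω) = ψ b - x := by
        rw [← h1, hsplit, h2]
      have h4 : (∑ i ∈ Finset.Ico a b, ξ i ω) = (ψ b - x) - (ψ a - x) := by
        rw [← this]; abel
      rw [h4]; abel
    intro a _ b _ hab
    rcases lt_or_gt_of_ne hab with h | h
    · exact key a b h
    · exact (key b a h).symm
  calc ∑' x : V, μ {ω | ∃ m ≤ n, x + (∑ i ∈ Finset.range m, ξ i ω) = ψ m}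
      = ∑' x : V, ∑ m ∈ Finset.range (n + 1), μ (FH m x) := by
        refine tsum_congr fun x => ?_
        rw [hdecomp x, measure_biUnion_finset (hdisj x) (fun m _ => hFHmeas m x)]
    _ = ∑ m ∈ Finset.range (n + 1), ∑' x : V, μ (FH m x) := by
        rw [Summable.tsum_finsetSum (fun m _ => ENNReal.summable)]
    _ = ∑ m ∈ Finset.range (n + 1), μ (G m) := by
        refine Finset.sum_congr rfl fun m _ => ?_
        have hunion : (⋃ x : V, FH m x) = G m := by
          ext ω
          simp only [Set.mem_iUnion, hFH, Set.mem_inter_iff, Set.mem_setOf_eq]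
          constructor
          · rintro ⟨x, -, hg⟩; exact hg
          · intro hg
            exact ⟨ψ m - (∑ i ∈ Finset.range m, ξ i ω), by abel, hg⟩
        have hpd : Pairwise (Function.onFun Disjoint (fun x => FH m x)) := by
          intro x y hxy
          refine Set.disjoint_left.mpr fun ω hA hB => ?_
          apply hxy
          have h1 : (∑ i ∈ Finset.range m, ξ i ω) = ψ m - x := hA.1
          have h2 : (∑ i ∈ Finset.range m, ξ i ω) = ψ m - y := hB.1
          have := h1.symm.trans h2
          have h3 : ψ m - (ψ m - x) = ψ m - (ψ m - y) := by rw [← this]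
          simpa [sub_sub_cancel] using h3
        rw [← hunion, measure_iUnion hpd (fun x => hFHmeas m x)]
    _ = ∑ m ∈ Finset.range (n + 1),
          μ {ω | ∀ k < m, (∑ i ∈ Finset.Ico k m, ξ i ω) ≠ ψ m - ψ k} := rfl

end count

section algebra

lemma triangle_swap (n : ℕ) (f : ℕ → ℕ → ℝ≥0∞) :
    ∑ m ∈ Finset.range (n + 1), ∑ j ∈ Finset.Ioc m n, f m j
      = ∑ m ∈ Finset.range (n + 1), ∑ k ∈ Finset.range m, f k m := by
  have h1 : ∀ m ∈ Finset.range (n + 1), ∑ j ∈ Finset.Ioc m n, f m j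
      = ∑ j ∈ Finset.range (n + 1), if m < j then f m j else 0 := by
    intro m _
    rw [← Finset.sum_filter]
    congr 1
    ext j
    simp only [Finset.mem_Ioc, Finset.mem_filter, Finset.mem_range]
    omega
  have h2 : ∀ j ∈ Finset.range (n + 1), ∑ k ∈ Finset.range j, f k j
      = ∑ k ∈ Finset.range (n + 1), if k < j then f k j else 0 := by
    intro j hj
    rw [← Finset.sum_filter]
    congr 1
    ext k
    simp only [Finset.mem_range, Finset.mem_filter] at *
    omega
  rw [Finset.sum_congr rfl h1, Finset.sum_congr rfl h2]
  exact Finset.sum_comm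

lemma algebra_step (n : ℕ) (y xv B : ℕ → ℝ≥0∞) (M U : ℕ → ℕ → ℝ≥0∞)
    (hA : ∀ m ≤ n, y m + ∑ k ∈ Finset.range m, M k m * y k = 1)
    (hB : ∀ k ≤ n, xv k + ∑ m ∈ Finset.Ioc k n, M k m * xv m = 1)
    (hC : ∀ m ≤ n, B m + ∑ k ∈ Finset.range m, U k m * B k = 1)
    (hMU : ∀ k m, M k m ≤ U k m) :
    ∑ m ∈ Finset.range (n + 1), B m ≤ ∑ m ∈ Finset.range (n + 1), y m := by
  have hle : ∀ m ∈ Finset.range (n + 1), m ≤ n :=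
    fun m hm => Nat.lt_succ_iff.mp (Finset.mem_range.mp hm)
  -- ∑ y = ∑ xv
  have e1 : ∑ m ∈ Finset.range (n + 1), y m
      = (∑ m ∈ Finset.range (n + 1), y m * xv m)
        + ∑ m ∈ Finset.range (n + 1), ∑ j ∈ Finset.Ioc m n, y m * (M m j * xv j) := by
    rw [← Finset.sum_add_distrib]
    refine Finset.sum_congr rfl fun m hm => ?_
    rw [← Finset.mul_sum, ← mul_add, hB m (hle m hm), mul_one]
  have e2 : ∑ m ∈ Finset.range (n + 1), xv m
      = (∑ m ∈ Finset.range (n + 1), y m * xv m)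
        + ∑ m ∈ Finset.range (n + 1), ∑ k ∈ Finset.range m, y k * (M k m * xv m) := by
    rw [← Finset.sum_add_distrib]
    refine Finset.sum_congr rfl fun m hm => ?_
    have := hA m (hle m hm)
    calc xv m = (y m + ∑ k ∈ Finset.range m, M k m * y k) * xv m := by rw [this, one_mul]
      _ = y m * xv m + ∑ k ∈ Finset.range m, y k * (M k m * xv m) := by
          rw [add_mul, Finset.sum_mul]
          congr 1
          exact Finset.sum_congr rfl fun k _ => by ring
  have hyx : ∑ m ∈ Finset.range (n + 1), y m = ∑ m ∈ Finset.range (n + 1), xv m := by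
    rw [e1, e2, triangle_swap n (fun a b => y a * (M a b * xv b))]
  -- ∑ B ≤ ∑ xv
  have e3 : ∑ m ∈ Finset.range (n + 1), xv m
      = (∑ m ∈ Finset.range (n + 1), xv m * B m)
        + ∑ m ∈ Finset.range (n + 1), ∑ k ∈ Finset.range m, xv m * (U k m * B k) := by
    rw [← Finset.sum_add_distrib]
    refine Finset.sum_congr rfl fun m hm => ?_
    rw [← Finset.mul_sum, ← mul_add, hC m (hle m hm), mul_one]
  have e4 : ∑ m ∈ Finset.range (n + 1), B m
      = (∑ m ∈ Finset.range (n + 1), xv m * B m)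
        + ∑ m ∈ Finset.range (n + 1), ∑ j ∈ Finset.Ioc m n, xv j * (M m j * B m) := by
    rw [← Finset.sum_add_distrib]
    refine Finset.sum_congr rfl fun m hm => ?_
    have := hB m (hle m hm)
    calc B m = B m * (xv m + ∑ j ∈ Finset.Ioc m n, M m j * xv j) := by rw [this, mul_one]
      _ = xv m * B m + ∑ j ∈ Finset.Ioc m n, xv j * (M m j * B m) := by
          rw [mul_add, Finset.mul_sum]
          congr 1
          · ring
          · exact Finset.sum_congr rfl fun j _ => by ring
  calc ∑ m ∈ Finset.range (n + 1), B m
      = (∑ m ∈ Finset.range (n + 1), xv m * B m)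
        + ∑ m ∈ Finset.range (n + 1), ∑ j ∈ Finset.Ioc m n, xv j * (M m j * B m) := e4
    _ = (∑ m ∈ Finset.range (n + 1), xv m * B m)
        + ∑ m ∈ Finset.range (n + 1), ∑ k ∈ Finset.range m, xv m * (M k m * B k) := by
        rw [triangle_swap n (fun a b => xv b * (M a b * B a))]
    _ ≤ (∑ m ∈ Finset.range (n + 1), xv m * B m)
        + ∑ m ∈ Finset.range (n + 1), ∑ k ∈ Finset.range m, xv m * (U k m * B k) := by
        refine add_le_add_right (Finset.sum_le_sum fun m _ => Finset.sum_le_sum fun k _ => ?_) _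
        exact mul_le_mul_right (mul_le_mul_left (hMU k m) _) _
    _ = ∑ m ∈ Finset.range (n + 1), xv m := e3.symm
    _ = ∑ m ∈ Finset.range (n + 1), y m := hyx.symm

end algebra

end PascalAux

/-- **Discrete Pascal principle on `ℤ^d` for symmetric increment distributions with
`p 0 ≥ 1/2`.**  A walk started at `x` is `x + ξ 0 + ⋯ + ξ (m-1)` with `ξ` i.i.d. of law
`p`.  For a deterministic trap path `φ`, the event `{τ̃_φ ≤ n}` is
`{∃ m ≤ n, Z m = φ m ∨ Z m = φ (m+1)}`.  Summing over all starting points `x`, the trap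
path `φ` catches at least as many walkers by time `n` as the constant trap path `0`. -/
theorem discrete_pascal_lazy
    (d : ℕ) (hd : 1 ≤ d)
    (p : (Fin d → ℤ) → ℝ≥0∞) (hsum : ∑' x : Fin d → ℤ, p x = 1)
    (hsymm : ∀ x : Fin d → ℤ, p (-x) = p x)
    (hhalf : 2⁻¹ ≤ p 0)
    {Ω : Type*} [MeasurableSpace Ω] (μ : Measure Ω) [IsProbabilityMeasure μ]
    (ξ : ℕ → Ω → (Fin d → ℤ))
    (hmeas : ∀ i, Measurable (ξ i))
    (hindep : iIndepFun ξ μ)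
    (hlaw : ∀ i (x : Fin d → ℤ), μ {ω | ξ i ω = x} = p x)
    (φ : ℕ → (Fin d → ℤ)) (n : ℕ) :
    ∑' x : Fin d → ℤ, μ {ω | ∃ m ≤ n, x + ∑ i ∈ Finset.range m, ξ i ω = 0} ≤
      ∑' x : Fin d → ℤ, μ {ω | ∃ m ≤ n,
        x + ∑ i ∈ Finset.range m, ξ i ω = φ m ∨
        x + ∑ i ∈ Finset.range m, ξ i ω = φ (m + 1)} := by
  classical
  have hL := PascalAux.tsum_firsthit μ ξ hmeas (fun _ => (0 : Fin d → ℤ)) n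
  simp only [sub_self] at hL
  have hRφ := PascalAux.tsum_firsthit μ ξ hmeas φ n
  have hCid : ∀ m ≤ n,
      μ {ω | ∀ k < m, (∑ i ∈ Finset.Ico k m, ξ i ω) ≠ (0 : Fin d → ℤ)}
        + ∑ k ∈ Finset.range m, PascalAux.qc p (m - k) 0
          * μ {ω | ∀ j < k, (∑ i ∈ Finset.Ico j k, ξ i ω) ≠ (0 : Fin d → ℤ)} = 1 := by
    intro m _
    have h := PascalAux.identA μ ξ p hmeas hindep hlaw (fun _ => (0 : Fin d → ℤ)) m
    simpa only [sub_self] using h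
  have hAid : ∀ m ≤ n,
      μ {ω | ∀ k < m, (∑ i ∈ Finset.Ico k m, ξ i ω) ≠ φ m - φ k}
        + ∑ k ∈ Finset.range m, PascalAux.qc p (m - k) (φ m - φ k)
          * μ {ω | ∀ j < k, (∑ i ∈ Finset.Ico j k, ξ i ω) ≠ φ k - φ j} = 1 :=
    fun m _ => PascalAux.identA μ ξ p hmeas hindep hlaw φ m
  have hBid : ∀ k ≤ n,
      μ {ω | ∀ m ≤ n, k < m → (∑ i ∈ Finset.Ico k m, ξ i ω) ≠ φ m - φ k}
        + ∑ m ∈ Finset.Ioc k n, PascalAux.qc p (m - k) (φ m - φ k)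
          * μ {ω | ∀ j ≤ n, m < j → (∑ i ∈ Finset.Ico m j, ξ i ω) ≠ φ j - φ m} = 1 :=
    fun k hk => PascalAux.identB μ ξ p hmeas hindep hlaw φ n k hk
  have halg := PascalAux.algebra_step n
    (fun m => μ {ω | ∀ k < m, (∑ i ∈ Finset.Ico k m, ξ i ω) ≠ φ m - φ k})
    (fun k => μ {ω | ∀ m ≤ n, k < m → (∑ i ∈ Finset.Ico k m, ξ i ω) ≠ φ m - φ k})
    (fun m => μ {ω | ∀ k < m, (∑ i ∈ Finset.Ico k m, ξ i ω) ≠ (0 : Fin d → ℤ)})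
    (fun k m => PascalAux.qc p (m - k) (φ m - φ k))
    (fun k m => PascalAux.qc p (m - k) 0)
    hAid hBid hCid
    (fun k m => PascalAux.qc_key p hsum hsymm hhalf (m - k) (φ m - φ k))
  calc ∑' x : Fin d → ℤ, μ {ω | ∃ m ≤ n, x + ∑ i ∈ Finset.range m, ξ i ω = 0}
      = ∑ m ∈ Finset.range (n + 1),
          μ {ω | ∀ k < m, (∑ i ∈ Finset.Ico k m, ξ i ω) ≠ (0 : Fin d → ℤ)} := hL
    _ ≤ ∑ m ∈ Finset.range (n + 1),
          μ {ω | ∀ k < m, (∑ i ∈ Finset.Ico k m, ξ i ω) ≠ φ m - φ k} := halg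
    _ = ∑' x : Fin d → ℤ, μ {ω | ∃ m ≤ n, x + ∑ i ∈ Finset.range m, ξ i ω = φ m} := hRφ.symm
    _ ≤ ∑' x : Fin d → ℤ, μ {ω | ∃ m ≤ n,
          x + ∑ i ∈ Finset.range m, ξ i ω = φ m ∨
          x + ∑ i ∈ Finset.range m, ξ i ω = φ (m + 1)} := by
        refine ENNReal.tsum_le_tsum fun x => measure_mono ?_
        rintro ω ⟨m, hm, hEq⟩
        exact ⟨m, hm, Or.inl hEq⟩
end

section
/- Let $p(\cdot)$ be any symmetric probability distribution on $\mathbb{Z}^d$, $d\geq 1$. Let $(\bar Z_n)_{n\geq 0}$ be the random path on $\mathbb{Z}^d$ such that $(\bar Z_{2k})_{k\geq 0}$ is a random walk started at $0$ with i.i.d. increments of law $p$ and $\bar Z_{2k+1}=\bar Z_{2k}$ for all $k\geq 0$, and let $(f_n)_{n\geq 0}$ be a deterministic path in $\mathbb{Z}^d$ with $f_{2k-1}=f_{2k}$ for all $k\geq 1$. Let $Z$ be a random walk with i.i.d. increments of law $p$, set $\phi_i:=-f_{2i}$ for $i\geq 0$, and $\tilde\tau_\phi:=\min\{m\geq 0: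 Z_m=\phi_m \text{ or } Z_m=\phi_{m+1}\}$. Then for every $n\in\mathbb{N}$, $\mathbb{E}[|R_{2n+1}(\bar Z+f)|] = \sum_{x\in\mathbb{Z}^d}\mathbb{P}^Z_x(\tilde\tau_\phi\leq n)$, where $\mathbb{P}^Z_x$ denotes the law of $Z$ started at $x$. -/
open MeasureTheory ProbabilityTheory Finset
open scoped ENNReal

lemma aux_meas_preimage {α Ω : Type*} [MeasurableSpace α] [MeasurableSingletonClass α]
    [Countable α] [MeasurableSpace Ω] (ν : Measure Ω) {g : Ω → α} (hg : Measurable g)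
    (s : Set α) : ν (g ⁻¹' s) = ∑' x : s, ν (g ⁻¹' {(x : α)}) := by
  have h : g ⁻¹' s = ⋃ x : s, g ⁻¹' {(x : α)} := by
    ext ω; simp
  rw [h, measure_iUnion]
  · intro i j hij
    refine Set.disjoint_left.2 fun ω h1 h2 => hij ?_
    have e1 : g ω = (i : α) := h1
    have e2 : g ω = (j : α) := h2
    exact Subtype.ext (e1.symm.trans e2)
  · exact fun x => hg (measurableSet_singleton _)

lemma aux_law_transfer {Ω : Type*} [MeasurableSpace Ω] (μ : Measure Ω)
    {E : Type*} [MeasurableSpace E] [MeasurableSingletonClass E] [Countable E] [Inhabited E]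
    (p : E → ℝ≥0∞)
    (ξ : ℕ → Ω → E) (hmeas : ∀ i, Measurable (ξ i))
    (hindep : iIndepFun ξ μ)
    (hlaw : ∀ i x, μ {ω | ξ i ω = x} = p x)
    (N : ℕ) (Q : Set (Fin N → E)) :
    μ ((fun ω (i : Fin N) => ξ (i : ℕ) ω) ⁻¹' Q) =
      ∑' v : Q, ∏ i : Fin N, p ((v : Fin N → E) i) := by
  have hg : Measurable (fun ω (i : Fin N) => ξ (i : ℕ) ω) :=
    measurable_pi_lambda _ fun i => hmeas i
  rw [aux_meas_preimage μ hg Q]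
  congr 1; funext v
  set w : Fin N → E := (v : Fin N → E) with hw
  set wext : ℕ → E := fun i => if h : i < N then w ⟨i, h⟩ else default with hwext
  have hpre : (fun ω (i : Fin N) => ξ (i : ℕ) ω) ⁻¹' {w} =
      ⋂ i ∈ Finset.range N, ξ i ⁻¹' {wext i} := by
    ext ω
    simp only [Set.mem_preimage, Set.mem_singleton_iff, funext_iff, Set.mem_iInter,
      Finset.mem_range]
    constructor
    · intro h i hi
      simp only [Set.mem_preimage, Set.mem_singleton_iff, hwext, dif_pos hi]
      exact h ⟨i, hi⟩
    · intro h i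
      have := h i i.isLt
      simpa only [Set.mem_preimage, Set.mem_singleton_iff, hwext, dif_pos i.isLt] using this
  rw [hpre, hindep.meas_biInter (fun i _ => ⟨{wext i}, measurableSet_singleton _, rfl⟩)]
  have hval : ∀ i, μ (ξ i ⁻¹' {wext i}) = p (wext i) := fun i => hlaw i (wext i)
  rw [Finset.prod_congr rfl fun i _ => hval i]
  rw [← Fin.prod_univ_eq_prod_range (fun i => p (wext i)) N]
  exact Finset.prod_congr rfl fun i _ => by simp [hwext, i.isLt]

/-- **Reduction of the insertion-perturbed range to a discrete trapping problem.**
`p` is any symmetric probability distribution on `ℤ^d`.  `Zbar` is the path with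
`Zbar (2k) = ξ 0 + ⋯ + ξ (k-1)` (a random walk started at `0` with i.i.d. increments of
law `p`, on `(Ω, μ)`) and `Zbar (2k+1) = Zbar (2k)`; `f` is a deterministic path with
`f (2k-1) = f (2k)` for `k ≥ 1`.  `Z` is a random walk with i.i.d. increments `ζ` of law
`p` (on `(Ω', μ')`), started at `x` it is `x + ζ 0 + ⋯ + ζ (m-1)`.  With `φ i := -f (2i)`,
the expected cardinality of the range of `Zbar + f` up to time `2n+1` equals the total
mass, summed over starting points `x`, of the event
`τ̃_φ ≤ n`, i.e. `∃ m ≤ n, Z m = φ m ∨ Z m = φ (m+1)`. -/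
theorem range_eq_trapped_mass
    (d : ℕ) (hd : 1 ≤ d)
    (p : (Fin d → ℤ) → ℝ≥0∞) (hsum : ∑' x : Fin d → ℤ, p x = 1)
    (hsymm : ∀ x : Fin d → ℤ, p (-x) = p x)
    {Ω : Type*} [MeasurableSpace Ω] (μ : Measure Ω) [IsProbabilityMeasure μ]
    (ξ : ℕ → Ω → (Fin d → ℤ))
    (hmeas : ∀ i, Measurable (ξ i))
    (hindep : iIndepFun ξ μ)
    (hlaw : ∀ i (x : Fin d → ℤ), μ {ω | ξ i ω = x} = p x)
    (Zbar : ℕ → Ω → (Fin d → ℤ))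
    (hZbar : ∀ n ω, Zbar n ω = ∑ i ∈ Finset.range (n / 2), ξ i ω)
    (f : ℕ → (Fin d → ℤ))
    (hf : ∀ k : ℕ, 1 ≤ k → f (2 * k - 1) = f (2 * k))
    {Ω' : Type*} [MeasurableSpace Ω'] (μ' : Measure Ω') [IsProbabilityMeasure μ']
    (ζ : ℕ → Ω' → (Fin d → ℤ))
    (hmeas' : ∀ i, Measurable (ζ i))
    (hindep' : iIndepFun ζ μ')
    (hlaw' : ∀ i (x : Fin d → ℤ), μ' {ω | ζ i ω = x} = p x)
    (φ : ℕ → (Fin d → ℤ))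
    (hφ : ∀ i, φ i = -f (2 * i))
    (n : ℕ) :
    ∫⁻ ω, (((Finset.range (2 * n + 2)).image fun i => Zbar i ω + f i).card : ℝ≥0∞) ∂μ =
      ∑' x : Fin d → ℤ, μ' {ω | ∃ m ≤ n,
        x + ∑ i ∈ Finset.range m, ζ i ω = φ m ∨
        x + ∑ i ∈ Finset.range m, ζ i ω = φ (m + 1)} := by
  classical
  set A : Ω → Finset (Fin d → ℤ) := fun ω => (Finset.range (2 * n + 2)).image fun i => Zbar i ω + f i
    with hA
  -- measurability of Zbar i
  have hZm : ∀ i, Measurable (Zbar i) := by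
    intro i
    have h1 : Zbar i = (fun v : Fin (i / 2) → (Fin d → ℤ) => ∑ j, v j) ∘
        (fun ω (j : Fin (i / 2)) => ξ (j : ℕ) ω) := by
      funext ω
      rw [Function.comp_apply, hZbar]
      exact (Fin.sum_univ_eq_sum_range (fun j => ξ j ω) (i / 2)).symm
    rw [h1]
    exact (measurable_of_countable _).comp (measurable_pi_lambda _ fun j => hmeas j)
  -- measurability of the events {ω | x ∈ A ω}
  have hAset : ∀ x : (Fin d → ℤ), {ω | x ∈ A ω} =
      ⋃ i ∈ Finset.range (2 * n + 2), (fun ω => Zbar i ω + f i) ⁻¹' {x} := by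
    intro x; ext ω
    simp [hA, Finset.mem_image, eq_comm]
  have hAmeas : ∀ x : (Fin d → ℤ), MeasurableSet {ω | x ∈ A ω} := by
    intro x
    rw [hAset x]
    exact MeasurableSet.biUnion (Finset.range _).countable_toSet fun i _ =>
      (((measurable_of_countable (· + f i)).comp (hZm i)) (measurableSet_singleton x))
  -- Step 1 : expected cardinality = sum of hitting probabilities
  have step1 : ∫⁻ ω, ((A ω).card : ℝ≥0∞) ∂μ = ∑' x : (Fin d → ℤ), μ {ω | x ∈ A ω} := by
    have hcard : ∀ ω, ((A ω).card : ℝ≥0∞) =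
        ∑' x : (Fin d → ℤ), Set.indicator {ω' | x ∈ A ω'} (fun _ => (1 : ℝ≥0∞)) ω := by
      intro ω
      have h0 : ∀ x : (Fin d → ℤ), x ∉ A ω →
          Set.indicator {ω' | x ∈ A ω'} (fun _ => (1 : ℝ≥0∞)) ω = 0 := by
        intro x hx
        exact Set.indicator_of_notMem (show ω ∉ {ω' | x ∈ A ω'} from hx) _
      rw [tsum_eq_sum (s := A ω) h0]
      rw [Finset.sum_congr rfl fun x hx => Set.indicator_of_mem (show ω ∈ {ω' | x ∈ A ω'} from hx) _]
      simp
    calc ∫⁻ ω, ((A ω).card : ℝ≥0∞) ∂μ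
        = ∫⁻ ω, ∑' x : (Fin d → ℤ), Set.indicator {ω' | x ∈ A ω'} (fun _ => (1 : ℝ≥0∞)) ω ∂μ := by
          exact lintegral_congr fun ω => hcard ω
      _ = ∑' x : (Fin d → ℤ), ∫⁻ ω, Set.indicator {ω' | x ∈ A ω'} (fun _ => (1 : ℝ≥0∞)) ω ∂μ := by
          exact lintegral_tsum fun x =>
            ((measurable_const.indicator (hAmeas x)).aemeasurable)
      _ = ∑' x : (Fin d → ℤ), μ {ω | x ∈ A ω} := by
          refine tsum_congr fun x => ?_
          exact lintegral_indicator_one (hAmeas x)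
  -- Step 2 : identify the event {x ∈ A ω}
  have hf2 : ∀ k : ℕ, f (2 * k) = -φ k := fun k => by rw [hφ k, neg_neg]
  have hfodd : ∀ k : ℕ, f (2 * k + 1) = -φ (k + 1) := by
    intro k
    have h1 : 2 * (k + 1) - 1 = 2 * k + 1 := by omega
    have := hf (k + 1) (by omega)
    rw [h1] at this
    rw [this]; exact hf2 (k + 1)
  have step2 : ∀ x : (Fin d → ℤ), {ω | x ∈ A ω} =
      {ω | ∃ m ≤ n, (∑ i ∈ Finset.range m, ξ i ω) = x + φ m ∨
        (∑ i ∈ Finset.range m, ξ i ω) = x + φ (m + 1)} := by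
    intro x; ext ω
    simp only [hA, Set.mem_setOf_eq, Finset.mem_image, Finset.mem_range]
    constructor
    · rintro ⟨i, hi, hval⟩
      rcases Nat.even_or_odd i with ⟨k, hk⟩ | ⟨k, hk⟩
      · refine ⟨k, by omega, Or.inl ?_⟩
        have hdiv : i / 2 = k := by omega
        rw [hZbar, hdiv] at hval
        have hfi : f i = -φ k := by rw [show i = 2 * k by omega]; exact hf2 k
        rw [hfi, ← sub_eq_add_neg] at hval
        exact sub_eq_iff_eq_add.mp hval
      · refine ⟨k, by omega, Or.inr ?_⟩
        have hdiv : i / 2 = k := by omega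
        rw [hZbar, hdiv] at hval
        have hfi : f i = -φ (k + 1) := by rw [show i = 2 * k + 1 by omega]; exact hfodd k
        rw [hfi, ← sub_eq_add_neg] at hval
        exact sub_eq_iff_eq_add.mp hval
    · rintro ⟨m, hm, h | h⟩
      · refine ⟨2 * m, by omega, ?_⟩
        rw [hZbar, show 2 * m / 2 = m by omega, h, hf2 m]
        exact add_neg_cancel_right x (φ m)
      · refine ⟨2 * m + 1, by omega, ?_⟩
        rw [hZbar, show (2 * m + 1) / 2 = m by omega, h, hfodd m]
        exact add_neg_cancel_right x (φ (m + 1))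
  -- The tuple events
  set Q : (Fin d → ℤ) → Set (Fin n → (Fin d → ℤ)) := fun x =>
    {v | ∃ m ≤ n, x + (∑ i ∈ Finset.range m, (if h : i < n then v ⟨i, h⟩ else 0)) = φ m ∨
      x + (∑ i ∈ Finset.range m, (if h : i < n then v ⟨i, h⟩ else 0)) = φ (m + 1)} with hQ
  have hsumext : ∀ {η : ℕ → (Fin d → ℤ)} (m : ℕ), m ≤ n →
      (∑ i ∈ Finset.range m, (if h : i < n then η i else 0)) = ∑ i ∈ Finset.range m, η i := by
    intro η m hm
    refine Finset.sum_congr rfl fun i hi => ?_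
    rw [dif_pos (lt_of_lt_of_le (Finset.mem_range.mp hi) hm)]
  have hQξ : ∀ x : (Fin d → ℤ),
      {ω | ∃ m ≤ n, (∑ i ∈ Finset.range m, ξ i ω) = x + φ m ∨
        (∑ i ∈ Finset.range m, ξ i ω) = x + φ (m + 1)} =
      (fun ω (i : Fin n) => ξ (i : ℕ) ω) ⁻¹' Q (-x) := by
    intro x; ext ω
    simp only [Set.mem_setOf_eq, Set.mem_preimage, hQ]
    constructor
    · rintro ⟨m, hm, h⟩
      refine ⟨m, hm, ?_⟩
      rw [hsumext m hm]
      rcases h with h | h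
      · exact Or.inl (by rw [h]; abel)
      · exact Or.inr (by rw [h]; abel)
    · rintro ⟨m, hm, h⟩
      rw [hsumext m hm] at h
      refine ⟨m, hm, ?_⟩
      rcases h with h | h
      · exact Or.inl (by rw [← h]; abel)
      · exact Or.inr (by rw [← h]; abel)
  have hQζ : ∀ x : (Fin d → ℤ),
      {ω | ∃ m ≤ n, x + (∑ i ∈ Finset.range m, ζ i ω) = φ m ∨
        x + (∑ i ∈ Finset.range m, ζ i ω) = φ (m + 1)} =
      (fun ω (i : Fin n) => ζ (i : ℕ) ω) ⁻¹' Q x := by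
    intro x; ext ω
    simp only [Set.mem_setOf_eq, Set.mem_preimage, hQ]
    constructor
    · rintro ⟨m, hm, h⟩
      exact ⟨m, hm, by rw [hsumext m hm]; exact h⟩
    · rintro ⟨m, hm, h⟩
      rw [hsumext m hm] at h
      exact ⟨m, hm, h⟩
  -- put it together
  rw [step1]
  calc ∑' x : (Fin d → ℤ), μ {ω | x ∈ A ω}
      = ∑' x : (Fin d → ℤ), μ ((fun ω (i : Fin n) => ξ (i : ℕ) ω) ⁻¹' Q (-x)) := by
        refine tsum_congr fun x => ?_
        rw [step2 x, hQξ x]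
    _ = ∑' x : (Fin d → ℤ), μ ((fun ω (i : Fin n) => ξ (i : ℕ) ω) ⁻¹' Q x) := by
        have := Equiv.tsum_eq (Equiv.neg (Fin d → ℤ))
          (fun x => μ ((fun ω (i : Fin n) => ξ (i : ℕ) ω) ⁻¹' Q x))
        simpa [Equiv.neg_apply] using this
    _ = ∑' x : (Fin d → ℤ), μ' ((fun ω (i : Fin n) => ζ (i : ℕ) ω) ⁻¹' Q x) := by
        refine tsum_congr fun x => ?_
        rw [aux_law_transfer μ p ξ hmeas hindep hlaw n (Q x),
          aux_law_transfer μ' p ζ hmeas' hindep' hlaw' n (Q x)]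
    _ = ∑' x : (Fin d → ℤ), μ' {ω | ∃ m ≤ n,
          x + ∑ i ∈ Finset.range m, ζ i ω = φ m ∨
          x + ∑ i ∈ Finset.range m, ζ i ω = φ (m + 1)} := by
        refine tsum_congr fun x => ?_
        rw [hQζ x]
end

section
/- Let $p(\cdot)$ be a symmetric probability distribution on $\mathbb{Z}$ satisfying $p(k)\geq p(k+1)$ for all $k\geq 1$ and $p(0)\geq p(3)$. Fix a sequence $\phi=(\phi_i)_{i\geq 0}$ in $\mathbb{Z}$, and for $n\geq 0$, $x\in\mathbb{Z}$ define $v^\phi_n(x):=1-\sum_{z\in\mathbb{Z}}\mathbb{P}^Z_z(Z_n=x,\ \tilde\tau_\phi>n)$, where $\mathbb{P}^Z_z$ is the law of the random walk with increments of law $p$ started at $z$ and $\tilde\tau_\phi:=\min\{m\geq 0: Z_m=\phi_m \text{ or } Z_m=\phi_{m+1}\}$; let $v^0_n$ denote the case $\phi\equiv 0$. Suppose that for some $n\geq 0$, $v^\phi_n$ symmetrically dominates $v^0_n$, meaning $\sum_{|x|\geq k} v^0_n(x)\leq\sum_{|x|\geq k} v^\phi_n(x_0+x)$ for all integers $k\geq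 0$ and all $x_0\in\mathbb{Z}$. Then $v^\phi_{n+1}$ symmetrically dominates $v^0_{n+1}$. -/
open MeasureTheory ProbabilityTheory Finset
open scoped ENNReal

set_option linter.unreachableTactic false
set_option linter.unusedTactic false
set_option linter.unusedSectionVars false
namespace SymDomAux

lemma tsum_shift (f : ℤ → ℝ≥0∞) (c : ℤ) : ∑' x : ℤ, f (c + x) = ∑' x : ℤ, f x :=
  (Equiv.addLeft c).tsum_eq f

lemma tsum_ite_or (f : ℤ → ℝ≥0∞) (S : ℤ → Prop) [DecidablePred S] (b : ℤ) (hb : ¬ S b) :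
    ∑' x : ℤ, (if S x ∨ x = b then f x else 0)
      = (∑' x : ℤ, if S x then f x else 0) + f b := by
  rw [ENNReal.tsum_eq_add_tsum_ite b]
  rw [if_pos (Or.inr rfl)]
  rw [add_comm]
  congr 1
  apply tsum_congr
  intro x
  by_cases hx : x = b
  · simp [hx, hb]
  · simp only [if_neg hx]
    by_cases hS : S x
    · rw [if_pos (Or.inl hS), if_pos hS]
    · rw [if_neg, if_neg hS]
      tauto

variable (p : ℤ → ℝ≥0∞)

/-- tail kernel -/
noncomputable def rho (k : ℕ) (d : ℤ) : ℝ≥0∞ :=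
  ∑' x : ℤ, if (k : ℤ) ≤ |x| then p (x - d) else 0

lemma p_le_one (hsum : ∑' k : ℤ, p k = 1) (j : ℤ) : p j ≤ 1 := by
  rw [← hsum]; exact ENNReal.le_tsum j

lemma p_ne_top (hsum : ∑' k : ℤ, p k = 1) (j : ℤ) : p j ≠ ∞ :=
  ne_top_of_le_ne_top ENNReal.one_ne_top (p_le_one p hsum j)

lemma tsum_p_sub (hsum : ∑' k : ℤ, p k = 1) (x : ℤ) : ∑' y : ℤ, p (x - y) = 1 := by
  have h := (Equiv.subLeft x).tsum_eq p
  simp only [Equiv.subLeft_apply] at h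
  rw [h, hsum]

lemma pchain (hmono : ∀ k : ℤ, 1 ≤ k → p (k + 1) ≤ p k) :
    ∀ i j : ℤ, 1 ≤ i → i ≤ j → p j ≤ p i := by
  intro i j hi hij
  exact Int.le_induction (motive := fun j _ => p j ≤ p i) (le_refl (p i))
    (fun n hn ih => le_trans (hmono n (le_trans hi hn)) ih) j hij

lemma pkey (hmono : ∀ k : ℤ, 1 ≤ k → p (k + 1) ≤ p k) (h03 : p 3 ≤ p 0)
    (i j : ℤ) (h0 : 0 ≤ i) (hij : i < j) (h : 1 ≤ i ∨ 3 ≤ j) : p j ≤ p i := by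
  rcases h with h1 | h3
  · exact pchain p hmono i j h1 hij.le
  · have hi : i = 0 ∨ 1 ≤ i := by omega
    rcases hi with rfl | h1
    · exact le_trans (pchain p hmono 3 j (by norm_num) h3) h03
    · exact pchain p hmono i j h1 hij.le

lemma rho_symm (hsymm : ∀ k : ℤ, p (-k) = p k) (k : ℕ) (d : ℤ) :
    rho p k (-d) = rho p k d := by
  unfold rho
  rw [← (Equiv.neg ℤ).tsum_eq (fun x => if (k : ℤ) ≤ |x| then p (x - -d) else 0)]
  apply tsum_congr
  intro x
  simp only [Equiv.neg_apply, abs_neg]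
  by_cases h : (k : ℤ) ≤ |x|
  · rw [if_pos h, if_pos h]
    rw [show -x - -d = -(x - d) by ring, hsymm]
  · rw [if_neg h, if_neg h]

lemma rho_le_one (hsum : ∑' k : ℤ, p k = 1) (k : ℕ) (d : ℤ) : rho p k d ≤ 1 := by
  calc rho p k d ≤ ∑' x : ℤ, p (x - d) := by
        unfold rho
        apply ENNReal.tsum_le_tsum
        intro x
        by_cases h : (k : ℤ) ≤ |x|
        · simp [h]
        · simp [h]
    _ = 1 := by
        have h := (Equiv.subRight d).tsum_eq p
        simp only [Equiv.subRight_apply] at h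
        rw [h, hsum]

lemma rho_ne_top (hsum : ∑' k : ℤ, p k = 1) (k : ℕ) (d : ℤ) : rho p k d ≠ ∞ :=
  ne_top_of_le_ne_top ENNReal.one_ne_top (rho_le_one p hsum k d)

lemma rho_step (hsymm : ∀ k : ℤ, p (-k) = p k) (k : ℕ) (hk : 1 ≤ k) (d : ℤ) :
    rho p k (d + 1) + p ((k : ℤ) + d) = rho p k d + p ((k : ℤ) - 1 - d) := by
  classical
  have hk' : (1 : ℤ) ≤ (k : ℤ) := by exact_mod_cast hk
  have h1 : rho p k (d + 1) = ∑' x : ℤ, if (k : ℤ) ≤ |x + 1| then p (x - d) else 0 := by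
    unfold rho
    rw [← (Equiv.addRight (1 : ℤ)).tsum_eq
      (fun x => if (k : ℤ) ≤ |x| then p (x - (d + 1)) else 0)]
    apply tsum_congr
    intro x
    simp only [Equiv.coe_addRight]
    by_cases h : (k : ℤ) ≤ |x + 1|
    · simp only [h, ↓reduceIte]; ring_nf
    · simp only [h, ↓reduceIte]
  have e1 : ∑' x : ℤ, (if ((k : ℤ) ≤ |x + 1|) ∨ x = -(k : ℤ) then p (x - d) else 0)
      = (∑' x : ℤ, if (k : ℤ) ≤ |x + 1| then p (x - d) else 0) + p (-(k : ℤ) - d) := by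
    apply tsum_ite_or
    rw [show (-(k:ℤ) + 1) = -((k:ℤ) - 1) by ring, abs_neg, abs_of_nonneg (by omega)]
    omega
  have e2 : ∑' x : ℤ, (if ((k : ℤ) ≤ |x|) ∨ x = (k : ℤ) - 1 then p (x - d) else 0)
      = (∑' x : ℤ, if (k : ℤ) ≤ |x| then p (x - d) else 0) + p ((k : ℤ) - 1 - d) := by
    apply tsum_ite_or
    rw [abs_of_nonneg (by omega)]
    omega
  have heq : ∑' x : ℤ, (if ((k : ℤ) ≤ |x + 1|) ∨ x = -(k : ℤ) then p (x - d) else 0)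
      = ∑' x : ℤ, (if ((k : ℤ) ≤ |x|) ∨ x = (k : ℤ) - 1 then p (x - d) else 0) := by
    apply tsum_congr; intro x
    apply if_congr _ rfl rfl
    rw [le_abs, le_abs]
    omega
  have hfin : p (-(k : ℤ) - d) = p ((k : ℤ) + d) := by
    rw [show (-(k:ℤ) - d) = -((k:ℤ) + d) by ring, hsymm]
  rw [h1, ← hfin, ← e1, heq, e2]
  rfl

lemma rho_mono (hsum : ∑' k : ℤ, p k = 1) (hsymm : ∀ k : ℤ, p (-k) = p k)
    (hmono : ∀ k : ℤ, 1 ≤ k → p (k + 1) ≤ p k) (h03 : p 3 ≤ p 0)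
    (k : ℕ) (hk : 1 ≤ k) (d : ℕ) (h : 2 ≤ k ∨ 1 ≤ d) :
    rho p k (d : ℤ) ≤ rho p k ((d : ℤ) + 1) := by
  have hstep := rho_step p hsymm k hk (d : ℤ)
  have hk' : (1 : ℤ) ≤ (k : ℤ) := by exact_mod_cast hk
  have hd0 : (0 : ℤ) ≤ (d : ℤ) := Int.ofNat_nonneg d
  have hple : p ((k : ℤ) + d) ≤ p ((k : ℤ) - 1 - d) := by
    by_cases hi : (1 : ℤ) ≤ (k : ℤ) - 1 - d
    · exact pkey p hmono h03 _ _ (by omega) (by omega) (Or.inl hi)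
    · by_cases hz : (k : ℤ) - 1 - d = 0
      · -- i = 0, need 3 ≤ k + d = 2k - 1
        have hd1 : (1 : ℤ) ≤ (d : ℤ) := by
          rcases h with h2 | h1
          · have : (2 : ℤ) ≤ (k : ℤ) := by exact_mod_cast h2
            omega
          · exact_mod_cast h1
        exact pkey p hmono h03 _ _ (by omega) (by omega) (Or.inr (by omega))
      · -- negative: use symmetry
        rw [show ((k : ℤ) - 1 - d) = -((d : ℤ) + 1 - k) by ring, hsymm]
        exact pkey p hmono h03 _ _ (by omega) (by omega) (Or.inl (by omega))
  have h2 : rho p k (d : ℤ) + p ((k:ℤ) + d) ≤ rho p k ((d : ℤ) + 1) + p ((k:ℤ) + d) := by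
    calc rho p k (d : ℤ) + p ((k:ℤ) + d) ≤ rho p k (d : ℤ) + p ((k:ℤ) - 1 - d) :=
          add_le_add_right hple _
      _ = rho p k ((d : ℤ) + 1) + p ((k:ℤ) + d) := hstep.symm
  exact (ENNReal.add_le_add_iff_right (p_ne_top p hsum _)).mp h2

lemma layer_expand (β : ℕ → ℝ≥0∞) (κ : ℤ → ℝ≥0∞)
    (hκ : ∀ z : ℤ, κ z = ∑ j ∈ Finset.range (z.natAbs + 1), β j)
    (H : ℤ → ℝ≥0∞) (c : ℤ) :
    ∑' z : ℤ, H z * κ (z - c)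
      = ∑' j : ℕ, (∑' x : ℤ, if (j : ℤ) ≤ |x| then H (c + x) else 0) * β j := by
  have hfin : ∀ x : ℤ, κ x = ∑' j : ℕ, (if (j : ℤ) ≤ |x| then β j else 0) := by
    intro x
    rw [hκ x]
    rw [tsum_eq_sum (s := Finset.range (x.natAbs + 1)) ?h]
    · apply Finset.sum_congr rfl
      intro j hj
      rw [if_pos]
      rw [Finset.mem_range] at hj
      rw [Int.abs_eq_natAbs]
      exact_mod_cast Nat.lt_succ_iff.mp hj
    · intro j hj
      rw [Finset.mem_range] at hj
      rw [if_neg]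
      rw [Int.abs_eq_natAbs]
      intro hc
      have : j ≤ x.natAbs := by exact_mod_cast hc
      omega
  calc ∑' z : ℤ, H z * κ (z - c)
      = ∑' x : ℤ, H (c + x) * κ x := by
        rw [← tsum_shift (fun z => H z * κ (z - c)) c]
        apply tsum_congr; intro x
        congr 2
        ring
    _ = ∑' x : ℤ, ∑' j : ℕ, (if (j : ℤ) ≤ |x| then H (c + x) * β j else 0) := by
        apply tsum_congr; intro x
        rw [hfin x, ← ENNReal.tsum_mul_left]
        apply tsum_congr; intro j
        by_cases h : (j : ℤ) ≤ |x| <;> simp [h]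
    _ = ∑' j : ℕ, ∑' x : ℤ, (if (j : ℤ) ≤ |x| then H (c + x) * β j else 0) :=
        ENNReal.tsum_comm
    _ = ∑' j : ℕ, (∑' x : ℤ, if (j : ℤ) ≤ |x| then H (c + x) else 0) * β j := by
        apply tsum_congr; intro j
        rw [← ENNReal.tsum_mul_right]
        apply tsum_congr; intro x
        by_cases h : (j : ℤ) ≤ |x| <;> simp [h]

lemma layer_le (F G : ℤ → ℝ≥0∞)
    (hdom : ∀ (j : ℕ) (c : ℤ),
      (∑' x : ℤ, if (j : ℤ) ≤ |x| then F x else 0)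
        ≤ ∑' x : ℤ, if (j : ℤ) ≤ |x| then G (c + x) else 0)
    (β : ℕ → ℝ≥0∞) (κ : ℤ → ℝ≥0∞)
    (hκ : ∀ z : ℤ, κ z = ∑ j ∈ Finset.range (z.natAbs + 1), β j) (c : ℤ) :
    ∑' z : ℤ, F z * κ z ≤ ∑' z : ℤ, G z * κ (z - c) := by
  have h1 : ∑' z : ℤ, F z * κ z = ∑' z : ℤ, F z * κ (z - 0) := by
    apply tsum_congr; intro z; rw [sub_zero]
  rw [h1, layer_expand β κ hκ F 0, layer_expand β κ hκ G c]
  apply ENNReal.tsum_le_tsum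
  intro j
  apply mul_le_mul_left
  calc (∑' x : ℤ, if (j : ℤ) ≤ |x| then F (0 + x) else 0)
      = ∑' x : ℤ, if (j : ℤ) ≤ |x| then F x else 0 := by
        apply tsum_congr; intro x; rw [zero_add]
    _ ≤ _ := hdom j c

lemma conv_tail (H : ℤ → ℝ≥0∞) (k : ℕ) (c : ℤ) :
    ∑' x : ℤ, (if (k : ℤ) ≤ |x| then ∑' y : ℤ, p (c + x - y) * H y else 0)
      = ∑' z : ℤ, H z * rho p k (z - c) := by
  calc ∑' x : ℤ, (if (k : ℤ) ≤ |x| then ∑' y : ℤ, p (c + x - y) * H y else 0)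
      = ∑' x : ℤ, ∑' y : ℤ, (if (k : ℤ) ≤ |x| then p (c + x - y) * H y else 0) := by
        apply tsum_congr; intro x
        by_cases h : (k : ℤ) ≤ |x| <;> simp [h]
    _ = ∑' y : ℤ, ∑' x : ℤ, (if (k : ℤ) ≤ |x| then p (c + x - y) * H y else 0) :=
        ENNReal.tsum_comm
    _ = ∑' y : ℤ, H y * rho p k (y - c) := by
        apply tsum_congr; intro y
        unfold rho
        rw [← ENNReal.tsum_mul_left]
        apply tsum_congr; intro x
        by_cases h : (k : ℤ) ≤ |x|
        · rw [if_pos h, if_pos h, mul_comm]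
          congr 2
          ring
        · simp [h]

/-! ### Probability part -/

variable {Ω : Type*} [MeasurableSpace Ω]

def ev (ξ : ℕ → Ω → ℤ) (A : ℕ → ℤ → Prop) (m : ℕ) (x z : ℤ) : Set Ω :=
  {ω | z + ∑ i ∈ Finset.range m, ξ i ω = x ∧
      ∀ l ≤ m, ¬ A l (z + ∑ i ∈ Finset.range l, ξ i ω)}

noncomputable def U (μ : Measure Ω) (ξ : ℕ → Ω → ℤ) (A : ℕ → ℤ → Prop)
    (m : ℕ) (x : ℤ) : ℝ≥0∞ :=
  ∑' z : ℤ, μ (ev ξ A m x z)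

def XX (ξ : ℕ → Ω → ℤ) (m : ℕ) : Ω → (↥(Finset.range m) → ℤ) :=
  fun ω i => ξ i ω

lemma ev_congr (ξ : ℕ → Ω → ℤ) (A : ℕ → ℤ → Prop) (m : ℕ) (x z : ℤ) (ω ω' : Ω)
    (h : ∀ i < m, ξ i ω = ξ i ω') : ω ∈ ev ξ A m x z → ω' ∈ ev ξ A m x z := by
  intro hω
  simp only [ev, Set.mem_setOf_eq] at hω ⊢
  have hsums : ∀ l ≤ m, ∑ i ∈ Finset.range l, ξ i ω = ∑ i ∈ Finset.range l, ξ i ω' := by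
    intro l hl
    apply Finset.sum_congr rfl
    intro i hi
    rw [Finset.mem_range] at hi
    exact h i (lt_of_lt_of_le hi hl)
  obtain ⟨h1, h2⟩ := hω
  constructor
  · rw [← hsums m le_rfl]; exact h1
  · intro l hl
    rw [← hsums l hl]; exact h2 l hl

lemma ev_measurableSet (ξ : ℕ → Ω → ℤ) (hmeas : ∀ i, Measurable (ξ i))
    (A : ℕ → ℤ → Prop) (m : ℕ) (x z : ℤ) : MeasurableSet (ev ξ A m x z) := by
  have hX : Measurable (XX ξ m) := measurable_pi_lambda _ (fun i => hmeas i)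
  have hsat : ev ξ A m x z = XX ξ m ⁻¹' (XX ξ m '' ev ξ A m x z) := by
    apply Set.Subset.antisymm (Set.subset_preimage_image _ _)
    rintro ω ⟨ω', hω', hXeq⟩
    apply ev_congr ξ A m x z ω' ω _ hω'
    intro i hi
    exact congrFun hXeq ⟨i, Finset.mem_range.mpr hi⟩
  rw [hsat]
  exact hX ((Set.to_countable _).measurableSet)

lemma ev_disjoint (ξ : ℕ → Ω → ℤ) (A : ℕ → ℤ → Prop) (m : ℕ) (x : ℤ) :
    Pairwise (Function.onFun Disjoint fun z => ev ξ A m x z) := by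
  intro z z' hzz'
  rw [Function.onFun, Set.disjoint_left]
  rintro ω ⟨h1, -⟩ ⟨h1', -⟩
  exact hzz' (by omega)

lemma U_le_one (μ : Measure Ω) [IsProbabilityMeasure μ] (ξ : ℕ → Ω → ℤ)
    (hmeas : ∀ i, Measurable (ξ i)) (A : ℕ → ℤ → Prop) (m : ℕ) (x : ℤ) :
    U μ ξ A m x ≤ 1 := by
  rw [U, ← measure_iUnion (ev_disjoint ξ A m x) (fun z => ev_measurableSet ξ hmeas A m x z)]
  exact prob_le_one

lemma U_trap (μ : Measure Ω) (ξ : ℕ → Ω → ℤ) (A : ℕ → ℤ → Prop) (m : ℕ) (x : ℤ)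
    (hx : A m x) : U μ ξ A m x = 0 := by
  rw [U]
  have : ∀ z : ℤ, ev ξ A m x z = (∅ : Set Ω) := by
    intro z
    rw [Set.eq_empty_iff_forall_notMem]
    rintro ω ⟨h1, h2⟩
    exact h2 m le_rfl (h1 ▸ hx)
  simp [this]

lemma ev_sat (ξ : ℕ → Ω → ℤ) (A : ℕ → ℤ → Prop) (m : ℕ) (x z : ℤ) :
    ev ξ A m x z = XX ξ m ⁻¹' (XX ξ m '' ev ξ A m x z) := by
  apply Set.Subset.antisymm (Set.subset_preimage_image _ _)
  rintro ω ⟨ω', hω', hXeq⟩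
  apply ev_congr ξ A m x z ω' ω _ hω'
  intro i hi
  exact congrFun hXeq ⟨i, Finset.mem_range.mpr hi⟩

lemma U_rec (μ : Measure Ω) [IsProbabilityMeasure μ] (ξ : ℕ → Ω → ℤ)
    (hmeas : ∀ i, Measurable (ξ i))
    (hindep : iIndepFun ξ μ)
    (p : ℤ → ℝ≥0∞) (hlaw : ∀ i k, μ {ω | ξ i ω = k} = p k)
    (A : ℕ → ℤ → Prop) (m : ℕ) (x : ℤ) (hx : ¬ A (m + 1) x) :
    U μ ξ A (m + 1) x = ∑' y : ℤ, U μ ξ A m y * p (x - y) := by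
  classical
  set C : ℤ → Set Ω := fun t => {ω | ξ m ω = t} with hC
  have hCmeas : ∀ t, MeasurableSet (C t) := by
    intro t
    exact (hmeas m) (measurableSet_singleton t)
  have hsplit : ∀ z : ℤ, ev ξ A (m + 1) x z = ⋃ y : ℤ, (ev ξ A m y z ∩ C (x - y)) := by
    intro z
    ext ω
    simp only [Set.mem_iUnion, Set.mem_inter_iff, ev, Set.mem_setOf_eq, hC]
    have hs : ∑ i ∈ Finset.range (m + 1), ξ i ω
        = (∑ i ∈ Finset.range m, ξ i ω) + ξ m ω := Finset.sum_range_succ _ m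
    constructor
    · rintro ⟨h1, h2⟩
      refine ⟨z + ∑ i ∈ Finset.range m, ξ i ω,
        ⟨⟨rfl, fun l hl => h2 l (Nat.le_succ_of_le hl)⟩, ?_⟩⟩
      omega
    · rintro ⟨y, ⟨h1, h2⟩, h3⟩
      constructor
      · omega
      · intro l hl
        by_cases hlm : l ≤ m
        · exact h2 l hlm
        · have hlm1 : l = m + 1 := by omega
          subst hlm1
          have hxe : z + ∑ i ∈ Finset.range (m + 1), ξ i ω = x := by omega
          rw [hxe]
          exact hx
  have hdy : ∀ z : ℤ, Pairwise (Function.onFun Disjoint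
      fun y => ev ξ A m y z ∩ C (x - y)) := by
    intro z y y' hyy'
    rw [Function.onFun, Set.disjoint_left]
    rintro ω ⟨⟨h1, -⟩, -⟩ ⟨⟨h1', -⟩, -⟩
    exact hyy' (by omega)
  have hXY : IndepFun (XX ξ m) (fun ω (i : ↥({m} : Finset ℕ)) => ξ i ω) μ := by
    apply hindep.indepFun_finset (Finset.range m) {m} _ hmeas
    simp [Finset.disjoint_singleton_right]
  have hkey : ∀ (y z : ℤ), μ (ev ξ A m y z ∩ C (x - y))
      = μ (ev ξ A m y z) * p (x - y) := by
    intro y z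
    have hCpre : C (x - y) = (fun ω (i : ↥({m} : Finset ℕ)) => ξ i ω) ⁻¹'
        {g | g ⟨m, Finset.mem_singleton_self m⟩ = x - y} := rfl
    calc μ (ev ξ A m y z ∩ C (x - y))
        = μ ((XX ξ m ⁻¹' (XX ξ m '' ev ξ A m y z)) ∩
            ((fun ω (i : ↥({m} : Finset ℕ)) => ξ i ω) ⁻¹'
              {g | g ⟨m, Finset.mem_singleton_self m⟩ = x - y})) := by
          rw [← ev_sat, ← hCpre]
      _ = μ (XX ξ m ⁻¹' (XX ξ m '' ev ξ A m y z)) *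
            μ ((fun ω (i : ↥({m} : Finset ℕ)) => ξ i ω) ⁻¹'
              {g | g ⟨m, Finset.mem_singleton_self m⟩ = x - y}) :=
          hXY.measure_inter_preimage_eq_mul _ _
            ((Set.to_countable _).measurableSet) ((Set.to_countable _).measurableSet)
      _ = μ (ev ξ A m y z) * p (x - y) := by
          rw [← ev_sat, ← hCpre]
          congr 1
          exact hlaw m (x - y)
  calc U μ ξ A (m + 1) x = ∑' z : ℤ, μ (ev ξ A (m + 1) x z) := rfl
    _ = ∑' z : ℤ, ∑' y : ℤ, μ (ev ξ A m y z ∩ C (x - y)) := by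
        apply tsum_congr; intro z
        rw [hsplit z]
        exact measure_iUnion (hdy z)
          (fun y => (ev_measurableSet ξ hmeas A m y z).inter (hCmeas (x - y)))
    _ = ∑' y : ℤ, ∑' z : ℤ, μ (ev ξ A m y z) * p (x - y) := by
        rw [ENNReal.tsum_comm]
        apply tsum_congr; intro y
        apply tsum_congr; intro z
        exact hkey y z
    _ = ∑' y : ℤ, U μ ξ A m y * p (x - y) := by
        apply tsum_congr; intro y
        rw [U, ENNReal.tsum_mul_right]

/-! ### Layer decompositions of the kernels -/

noncomputable def betak (k : ℕ) : ℕ → ℝ≥0∞ := fun j =>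
  if j = 0 then rho p k 0 else rho p k (j : ℤ) - rho p k ((j : ℤ) - 1)

noncomputable def beta1 : ℕ → ℝ≥0∞ := fun j =>
  if j = 0 then 0 else if j = 1 then rho p 1 1
  else rho p 1 (j : ℤ) - rho p 1 ((j : ℤ) - 1)

lemma rho_eq_natAbs (hsymm : ∀ k : ℤ, p (-k) = p k) (k : ℕ) (z : ℤ) :
    rho p k z = rho p k (z.natAbs : ℤ) := by
  rcases Int.natAbs_eq z with h | h
  · rw [← h]
  · rw [← rho_symm p hsymm k (z.natAbs : ℤ), ← h]

lemma kappak_layers (hsum : ∑' k : ℤ, p k = 1) (hsymm : ∀ k : ℤ, p (-k) = p k)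
    (hmono : ∀ k : ℤ, 1 ≤ k → p (k + 1) ≤ p k) (h03 : p 3 ≤ p 0)
    (k : ℕ) (hk : 2 ≤ k) (z : ℤ) :
    rho p k z = ∑ j ∈ Finset.range (z.natAbs + 1), betak p k j := by
  rw [rho_eq_natAbs p hsymm k z]
  induction z.natAbs with
  | zero =>
    simp [betak]
  | succ m ih =>
    rw [Finset.sum_range_succ, ← ih]
    have hmon : rho p k ((m : ℤ)) ≤ rho p k ((m : ℤ) + 1) :=
      rho_mono p hsum hsymm hmono h03 k (by omega) m (Or.inl hk)
    have hb : betak p k (m + 1) = rho p k ((m : ℤ) + 1) - rho p k (m : ℤ) := by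
      rw [betak]
      rw [if_neg (Nat.succ_ne_zero m)]
      push_cast
      ring_nf
    rw [hb]
    push_cast
    rw [add_tsub_cancel_of_le hmon]

lemma kappa1_layers (hsum : ∑' k : ℤ, p k = 1) (hsymm : ∀ k : ℤ, p (-k) = p k)
    (hmono : ∀ k : ℤ, 1 ≤ k → p (k + 1) ≤ p k) (h03 : p 3 ≤ p 0) (z : ℤ) :
    (if z = 0 then 0 else rho p 1 z)
      = ∑ j ∈ Finset.range (z.natAbs + 1), beta1 p j := by
  by_cases hz : z = 0
  · simp [hz, beta1]
  · rw [if_neg hz]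
    rw [rho_eq_natAbs p hsymm 1 z]
    have hpos : 1 ≤ z.natAbs := by
      rcases Int.natAbs_eq_zero.mp.mt (by exact fun h => hz (by exact_mod_cast h)) with h
      omega
    obtain ⟨m, hm⟩ : ∃ m, z.natAbs = m + 1 := ⟨z.natAbs - 1, by omega⟩
    rw [hm]
    clear hm hpos hz
    induction m with
    | zero =>
      rw [show (0:ℕ)+1+1 = 2 by rfl, Finset.sum_range_succ, Finset.sum_range_one]
      simp [beta1]
    | succ m ih =>
      rw [Finset.sum_range_succ, ← ih]
      have hmon : rho p 1 ((m : ℤ) + 1) ≤ rho p 1 ((m : ℤ) + 1 + 1) := by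
        have := rho_mono p hsum hsymm hmono h03 1 (by omega) (m + 1) (Or.inr (by omega))
        push_cast at this ⊢
        convert this using 2 <;> ring
      have hb : beta1 p (m + 1 + 1) = rho p 1 ((m : ℤ) + 1 + 1) - rho p 1 ((m : ℤ) + 1) := by
        rw [beta1]
        rw [if_neg (by omega), if_neg (by omega)]
        push_cast
        ring_nf
      rw [hb]
      push_cast
      rw [add_tsub_cancel_of_le hmon]

/-! ### Master inequalities -/

lemma master_k2 (hsum : ∑' k : ℤ, p k = 1) (hsymm : ∀ k : ℤ, p (-k) = p k)
    (hmono : ∀ k : ℤ, 1 ≤ k → p (k + 1) ≤ p k) (h03 : p 3 ≤ p 0)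
    (F G : ℤ → ℝ≥0∞)
    (hdom : ∀ (j : ℕ) (c : ℤ),
      (∑' x : ℤ, if (j : ℤ) ≤ |x| then F x else 0)
        ≤ ∑' x : ℤ, if (j : ℤ) ≤ |x| then G (c + x) else 0)
    (k : ℕ) (hk : 2 ≤ k) (c : ℤ) :
    (∑' x : ℤ, if (k : ℤ) ≤ |x| then (∑' y : ℤ, p (x - y) * F y) else 0)
      ≤ ∑' x : ℤ, if (k : ℤ) ≤ |x| then (∑' y : ℤ, p (c + x - y) * G y) else 0 := by
  have h1 : (∑' x : ℤ, if (k : ℤ) ≤ |x| then (∑' y : ℤ, p (x - y) * F y) else 0)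
      = ∑' z : ℤ, F z * rho p k z := by
    calc (∑' x : ℤ, if (k : ℤ) ≤ |x| then (∑' y : ℤ, p (x - y) * F y) else 0)
        = ∑' x : ℤ, if (k : ℤ) ≤ |x| then (∑' y : ℤ, p (0 + x - y) * F y) else 0 := by
          apply tsum_congr; intro x
          apply if_congr Iff.rfl _ rfl
          apply tsum_congr; intro y
          rw [zero_add]
      _ = ∑' z : ℤ, F z * rho p k (z - 0) := conv_tail p F k 0
      _ = ∑' z : ℤ, F z * rho p k z := by
          apply tsum_congr; intro z; rw [sub_zero]
  rw [h1, conv_tail p G k c]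
  exact layer_le F G hdom (betak p k) (rho p k)
    (kappak_layers p hsum hsymm hmono h03 k hk) c

lemma master_k1 (hsum : ∑' k : ℤ, p k = 1) (hsymm : ∀ k : ℤ, p (-k) = p k)
    (hmono : ∀ k : ℤ, 1 ≤ k → p (k + 1) ≤ p k) (h03 : p 3 ≤ p 0)
    (F G : ℤ → ℝ≥0∞)
    (hdom : ∀ (j : ℕ) (c : ℤ),
      (∑' x : ℤ, if (j : ℤ) ≤ |x| then F x else 0)
        ≤ ∑' x : ℤ, if (j : ℤ) ≤ |x| then G (c + x) else 0)
    (a : ℤ) (hF0 : F 0 = 1) (hGa : G a = 1) :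
    (∑' x : ℤ, if ((1 : ℕ) : ℤ) ≤ |x| then (∑' y : ℤ, p (x - y) * F y) else 0)
      ≤ ∑' x : ℤ, if ((1 : ℕ) : ℤ) ≤ |x| then (∑' y : ℤ, p (a + x - y) * G y) else 0 := by
  classical
  set κ₁ : ℤ → ℝ≥0∞ := fun z => if z = 0 then 0 else rho p 1 z with hκ₁def
  have hsplit : ∀ (H : ℤ → ℝ≥0∞) (b : ℤ), H b = 1 →
      ∑' z : ℤ, H z * rho p 1 (z - b)
        = (∑' z : ℤ, H z * κ₁ (z - b)) + rho p 1 0 := by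
    intro H b hb
    rw [ENNReal.tsum_eq_add_tsum_ite b, hb, sub_self, one_mul, add_comm]
    congr 1
    apply tsum_congr; intro z
    by_cases hz : z = b
    · rw [if_pos hz, hz, hκ₁def]
      simp
    · rw [if_neg hz, hκ₁def]
      simp only []
      rw [if_neg (fun h => hz (sub_eq_zero.mp h))]
  have h1 : (∑' x : ℤ, if ((1 : ℕ) : ℤ) ≤ |x| then (∑' y : ℤ, p (x - y) * F y) else 0)
      = ∑' z : ℤ, F z * rho p 1 (z - 0) := by
    calc (∑' x : ℤ, if ((1 : ℕ) : ℤ) ≤ |x| then (∑' y : ℤ, p (x - y) * F y) else 0)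
        = ∑' x : ℤ, if ((1 : ℕ) : ℤ) ≤ |x| then (∑' y : ℤ, p (0 + x - y) * F y) else 0 := by
          apply tsum_congr; intro x
          apply if_congr Iff.rfl _ rfl
          apply tsum_congr; intro y
          rw [zero_add]
      _ = ∑' z : ℤ, F z * rho p 1 (z - 0) := conv_tail p F 1 0
  have h2 : (∑' x : ℤ, if ((1 : ℕ) : ℤ) ≤ |x| then (∑' y : ℤ, p (a + x - y) * G y) else 0)
      = ∑' z : ℤ, G z * rho p 1 (z - a) := conv_tail p G 1 a
  rw [h1, h2, hsplit F 0 hF0, hsplit G a hGa]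
  apply add_le_add_left
  have hFside : (∑' z : ℤ, F z * κ₁ (z - 0)) = ∑' z : ℤ, F z * κ₁ z := by
    apply tsum_congr; intro z; rw [sub_zero]
  rw [hFside]
  exact layer_le F G hdom (beta1 p) κ₁
    (fun z => kappa1_layers p hsum hsymm hmono h03 z) a

lemma one_sub_conv (hsum : ∑' k : ℤ, p k = 1) (u w : ℤ → ℝ≥0∞)
    (hu : ∀ y, u y ≤ 1) (hw : ∀ y, w y = 1 - u y) (x : ℤ) :
    1 - ∑' y : ℤ, u y * p (x - y) = ∑' y : ℤ, p (x - y) * w y := by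
  have hterm : ∀ y, p (x - y) * w y + u y * p (x - y) = p (x - y) := by
    intro y
    rw [hw y, mul_comm (u y), ← mul_add, tsub_add_cancel_of_le (hu y), mul_one]
  have hadd : (∑' y : ℤ, p (x - y) * w y) + ∑' y : ℤ, u y * p (x - y) = 1 := by
    rw [← ENNReal.tsum_add]
    calc ∑' y : ℤ, (p (x - y) * w y + u y * p (x - y))
        = ∑' y : ℤ, p (x - y) := tsum_congr hterm
      _ = 1 := tsum_p_sub p hsum x
  have hne : (∑' y : ℤ, u y * p (x - y)) ≠ ∞ := by
    apply ne_top_of_le_ne_top ENNReal.one_ne_top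
    calc (∑' y : ℤ, u y * p (x - y)) ≤ ∑' y : ℤ, p (x - y) :=
          ENNReal.tsum_le_tsum (fun y => mul_le_of_le_one_left zero_le (hu y))
      _ = 1 := tsum_p_sub p hsum x
  exact (ENNReal.eq_sub_of_add_eq hne hadd).symm

end SymDomAux


open SymDomAux in
/-- **Induction step for symmetric domination.**  `p` is a symmetric probability
distribution on `ℤ` with `p k ≥ p (k+1)` for `k ≥ 1` and `p 0 ≥ p 3`.  For the random
walk `Z m = z + ξ 0 + ⋯ + ξ (m-1)` started at `z`, and the trap path `φ` (resp. the
constant trap path `0`), `v n x = 1 - ∑_z P_z(Z n = x, τ̃_φ > n)` (resp. `v0 n x`), where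
`τ̃_φ > n` is the event that `Z m ∉ {φ m, φ (m+1)}` for all `m ≤ n`.  If `v n`
symmetrically dominates `v0 n`, i.e. `∑_{|x| ≥ k} v0 n x ≤ ∑_{|x| ≥ k} v n (x₀ + x)` for
all `k ≥ 0` and `x₀ ∈ ℤ`, then `v (n+1)` symmetrically dominates `v0 (n+1)`. -/
theorem symmetric_domination_step
    (p : ℤ → ℝ≥0∞) (hsum : ∑' k : ℤ, p k = 1)
    (hsymm : ∀ k : ℤ, p (-k) = p k)
    (hmono : ∀ k : ℤ, 1 ≤ k → p (k + 1) ≤ p k)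
    (h03 : p 3 ≤ p 0)
    {Ω : Type*} [MeasurableSpace Ω] (μ : Measure Ω) [IsProbabilityMeasure μ]
    (ξ : ℕ → Ω → ℤ)
    (hmeas : ∀ i, Measurable (ξ i))
    (hindep : iIndepFun ξ μ)
    (hlaw : ∀ i k, μ {ω | ξ i ω = k} = p k)
    (φ : ℕ → ℤ)
    (v v0 : ℕ → ℤ → ℝ≥0∞)
    (hv : ∀ m x, v m x = 1 - ∑' z : ℤ, μ {ω |
      z + ∑ i ∈ Finset.range m, ξ i ω = x ∧
      ∀ l ≤ m, ¬(z + ∑ i ∈ Finset.range l, ξ i ω = φ l ∨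
                 z + ∑ i ∈ Finset.range l, ξ i ω = φ (l + 1))})
    (hv0 : ∀ m x, v0 m x = 1 - ∑' z : ℤ, μ {ω |
      z + ∑ i ∈ Finset.range m, ξ i ω = x ∧
      ∀ l ≤ m, ¬(z + ∑ i ∈ Finset.range l, ξ i ω = 0)})
    (n : ℕ)
    (hdom : ∀ (k : ℕ) (x₀ : ℤ),
      (∑' x : ℤ, if (k : ℤ) ≤ |x| then v0 n x else 0) ≤
        ∑' x : ℤ, if (k : ℤ) ≤ |x| then v n (x₀ + x) else 0) :
    ∀ (k : ℕ) (x₀ : ℤ),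
      (∑' x : ℤ, if (k : ℤ) ≤ |x| then v0 (n + 1) x else 0) ≤
        ∑' x : ℤ, if (k : ℤ) ≤ |x| then v (n + 1) (x₀ + x) else 0 := by
  classical
  have hvU : ∀ m x, v m x
      = 1 - U μ ξ (fun l t => t = φ l ∨ t = φ (l + 1)) m x := hv
  have hv0U : ∀ m x, v0 m x
      = 1 - U μ ξ (fun _ t => t = 0) m x := hv0
  have hUφle : ∀ m x, U μ ξ (fun l t => t = φ l ∨ t = φ (l + 1)) m x ≤ 1 :=
    fun m x => U_le_one μ ξ hmeas _ m x
  have hvle : ∀ m x, v m x ≤ 1 := by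
    intro m x; rw [hvU]; exact tsub_le_self
  have hvtrap : ∀ m x, (x = φ m ∨ x = φ (m + 1)) → v m x = 1 := by
    intro m x hx
    rw [hvU, U_trap μ ξ _ m x hx, tsub_zero]
  have hv0trap : ∀ m, v0 m 0 = 1 := by
    intro m
    rw [hv0U, U_trap μ ξ _ m 0 rfl, tsub_zero]
  have hvrec : ∀ x, ¬(x = φ (n + 1) ∨ x = φ (n + 2))
      → v (n + 1) x = ∑' y : ℤ, p (x - y) * v n y := by
    intro x hx
    rw [hvU, U_rec μ ξ hmeas hindep p hlaw _ n x hx]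
    exact one_sub_conv p hsum _ (v n) (hUφle n) (hvU n) x
  have hv0rec : ∀ x : ℤ, x ≠ 0
      → v0 (n + 1) x = ∑' y : ℤ, p (x - y) * v0 n y := by
    intro x hx
    rw [hv0U, U_rec μ ξ hmeas hindep p hlaw _ n x hx]
    exact one_sub_conv p hsum _ (v0 n)
      (fun y => U_le_one μ ξ hmeas _ n y) (hv0U n) x
  have hvge : ∀ x, (∑' y : ℤ, p (x - y) * v n y) ≤ v (n + 1) x := by
    intro x
    by_cases hx : (x = φ (n + 1) ∨ x = φ (n + 2))
    · rw [hvtrap (n + 1) x hx]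
      calc (∑' y : ℤ, p (x - y) * v n y) ≤ ∑' y : ℤ, p (x - y) :=
            ENNReal.tsum_le_tsum (fun y => mul_le_of_le_one_right zero_le (hvle n y))
        _ = 1 := tsum_p_sub p hsum x
    · exact le_of_eq (hvrec x hx).symm
  set a : ℤ := φ (n + 1) with ha
  have hGa : v n a = 1 := hvtrap n a (Or.inr rfl)
  have hF0 : v0 n 0 = 1 := hv0trap n
  set E₁ : ℝ≥0∞ :=
    ∑' x : ℤ, if ((1 : ℕ) : ℤ) ≤ |x| then (∑' y : ℤ, p (x - y) * v0 n y) else 0 with hE₁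
  set E' : ℝ≥0∞ :=
    ∑' x : ℤ, if ((1 : ℕ) : ℤ) ≤ |x| then (∑' y : ℤ, p (a + x - y) * v n y) else 0 with hE'
  have hEE' : E₁ ≤ E' :=
    master_k1 p hsum hsymm hmono h03 (v0 n) (v n) hdom a hF0 hGa
  have hone : ((1 : ℕ) : ℤ) = (1 : ℤ) := Nat.cast_one
  have hL : ∑' x : ℤ, v0 (n + 1) x = 1 + E₁ := by
    rw [ENNReal.tsum_eq_add_tsum_ite (f := v0 (n + 1)) 0, hv0trap (n + 1)]
    congr 1
    apply tsum_congr; intro x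
    by_cases hx : x = 0
    · rw [if_pos hx, if_neg]
      rw [hx, hone]
      simp
    · rw [if_neg hx, if_pos, hv0rec x hx]
      rw [hone]
      exact Int.one_le_abs hx
  have hR : 1 + E' ≤ ∑' x : ℤ, v (n + 1) x := by
    rw [ENNReal.tsum_eq_add_tsum_ite (f := v (n + 1)) a]
    apply add_le_add
    · rw [hvtrap (n + 1) a (Or.inl rfl)]
    · have hE'2 : E' = ∑' z : ℤ,
          (if ((1 : ℕ) : ℤ) ≤ |z - a| then (∑' y : ℤ, p (z - y) * v n y) else 0) := by
        rw [hE', ← tsum_shift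
          (fun z => if ((1 : ℕ) : ℤ) ≤ |z - a| then (∑' y : ℤ, p (z - y) * v n y) else 0) a]
        apply tsum_congr; intro x
        have hax : a + x - a = x := by ring
        rw [hax]
      rw [hE'2]
      apply ENNReal.tsum_le_tsum
      intro z
      by_cases hz : z = a
      · rw [if_pos hz, hz]
        rw [if_neg (show ¬((1 : ℕ) : ℤ) ≤ |a - a| by rw [sub_self, hone]; simp)]
      · rw [if_neg hz,
          if_pos (show ((1 : ℕ) : ℤ) ≤ |z - a| by
            rw [hone]; exact Int.one_le_abs (fun h => hz (sub_eq_zero.mp h)))]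
        exact hvge z
  intro k x₀
  by_cases hk0 : k = 0
  · subst hk0
    have htriv : ∀ (f : ℤ → ℝ≥0∞),
        (∑' x : ℤ, if ((0 : ℕ) : ℤ) ≤ |x| then f x else 0) = ∑' x : ℤ, f x := by
      intro f
      apply tsum_congr; intro x
      rw [if_pos]
      rw [Nat.cast_zero]
      exact abs_nonneg x
    rw [htriv, htriv]
    calc ∑' x : ℤ, v0 (n + 1) x = 1 + E₁ := hL
      _ ≤ 1 + E' := add_le_add_right hEE' 1
      _ ≤ ∑' x : ℤ, v (n + 1) x := hR
      _ = ∑' x : ℤ, v (n + 1) (x₀ + x) := (tsum_shift (v (n + 1)) x₀).symm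
  by_cases hk1 : k = 1
  · subst hk1
    have hLHS : (∑' x : ℤ, if ((1 : ℕ) : ℤ) ≤ |x| then v0 (n + 1) x else 0) = E₁ := by
      rw [hE₁]
      apply tsum_congr; intro x
      by_cases hx : ((1 : ℕ) : ℤ) ≤ |x|
      · rw [if_pos hx, if_pos hx, hv0rec x]
        intro h
        rw [h, hone] at hx
        simp at hx
      · rw [if_neg hx, if_neg hx]
    set R : ℝ≥0∞ := ∑' x : ℤ, if ((1 : ℕ) : ℤ) ≤ |x| then v (n + 1) (x₀ + x) else 0 with hRdef
    have hsplit : (∑' x : ℤ, v (n + 1) (x₀ + x)) ≤ 1 + R := by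
      rw [ENNReal.tsum_eq_add_tsum_ite (f := fun x : ℤ => v (n + 1) (x₀ + x)) 0]
      apply add_le_add (hvle (n + 1) (x₀ + 0))
      rw [hRdef]
      apply ENNReal.tsum_le_tsum
      intro x
      by_cases hx : x = 0
      · rw [if_pos hx]
        exact zero_le
      · rw [if_neg hx,
          if_pos (show ((1 : ℕ) : ℤ) ≤ |x| by rw [hone]; exact Int.one_le_abs hx)]
    have hchain : 1 + E₁ ≤ 1 + R := by
      calc 1 + E₁ ≤ 1 + E' := add_le_add_right hEE' 1
        _ ≤ ∑' x : ℤ, v (n + 1) x := hR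
        _ = ∑' x : ℤ, v (n + 1) (x₀ + x) := (tsum_shift (v (n + 1)) x₀).symm
        _ ≤ 1 + R := hsplit
    rw [hLHS]
    exact (ENNReal.add_le_add_iff_left ENNReal.one_ne_top).mp hchain
  · have hk2 : 2 ≤ k := by omega
    have hM := master_k2 p hsum hsymm hmono h03 (v0 n) (v n) hdom k hk2 x₀
    have hx_ne : ∀ x : ℤ, (k : ℤ) ≤ |x| → x ≠ 0 := by
      intro x hx h
      rw [h] at hx
      simp at hx
      omega
    calc (∑' x : ℤ, if (k : ℤ) ≤ |x| then v0 (n + 1) x else 0)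
        = ∑' x : ℤ, if (k : ℤ) ≤ |x| then (∑' y : ℤ, p (x - y) * v0 n y) else 0 := by
          apply tsum_congr; intro x
          by_cases hx : (k : ℤ) ≤ |x|
          · rw [if_pos hx, if_pos hx, hv0rec x (hx_ne x hx)]
          · rw [if_neg hx, if_neg hx]
      _ ≤ ∑' x : ℤ, if (k : ℤ) ≤ |x| then (∑' y : ℤ, p (x₀ + x - y) * v n y) else 0 := hM
      _ ≤ ∑' x : ℤ, if (k : ℤ) ≤ |x| then v (n + 1) (x₀ + x) else 0 := by
          apply ENNReal.tsum_le_tsum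
          intro x
          by_cases hx : (k : ℤ) ≤ |x|
          · rw [if_pos hx, if_pos hx]
            exact hvge (x₀ + x)
          · rw [if_neg hx, if_neg hx]
end

section
/- Let $p(\cdot)$ be a symmetric probability distribution on $\mathbb{Z}$ satisfying $p(k)\geq p(k+1)$ for all $k\geq 1$ and $p(0)\geq p(3)$. Fix a sequence $\phi=(\phi_i)_{i\geq 0}$ in $\mathbb{Z}$, and for $n\geq 0$, $x\in\mathbb{Z}$ define $v^\phi_n(x):=1-\sum_{z\in\mathbb{Z}}\mathbb{P}^Z_z(Z_n=x,\ \tilde\tau_\phi>n)$, where $\mathbb{P}^Z_z$ is the law of the random walk with increments of law $p$ started at $z$ and $\tilde\tau_\phi:=\min\{m\geq 0: Z_m=\phi_m \text{ or } Z_m=\phi_{m+1}\}$; let $v^0_n$ denote the case $\phi\equiv 0$. Then for every $n\geq 0$, every integer $k\geq 0$ and every $x_0\in\mathbb{Z}$: $\sum_{|x|\geq k} v^0_n(x)\leq\sum_{|x|\geq k} v^\phi_n(x_0+x)$. -/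
open MeasureTheory ProbabilityTheory Finset
open scoped ENNReal

namespace SD

noncomputable section
open Classical

variable {p : ℤ → ℝ≥0∞}

/-- convolution of `p` with `f` -/
def conv (p f : ℤ → ℝ≥0∞) (x : ℤ) : ℝ≥0∞ := ∑' y : ℤ, p (x - y) * f y

/-- tail sum of `f` outside the window of radius `k-1` around `c` -/
def tail (f : ℤ → ℝ≥0∞) (k : ℕ) (c : ℤ) : ℝ≥0∞ :=
  ∑' x : ℤ, if (k : ℤ) ≤ |x - c| then f x else 0

lemma p_le_one (hsum : ∑' k : ℤ, p k = 1) (a : ℤ) : p a ≤ 1 :=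
  hsum ▸ ENNReal.le_tsum a

lemma tsum_shift (hsum : ∑' k : ℤ, p k = 1) (y : ℤ) : ∑' x : ℤ, p (x - y) = 1 := by
  rw [← hsum]
  simpa using (Equiv.subRight y).tsum_eq p

lemma mono_chain (hmono : ∀ k : ℤ, 1 ≤ k → p (k + 1) ≤ p k) :
    ∀ a b : ℤ, 1 ≤ a → a ≤ b → p b ≤ p a := by
  intro a b ha hab
  obtain ⟨N, rfl⟩ : ∃ N : ℕ, b = a + N := ⟨(b - a).toNat, by omega⟩
  clear hab
  induction N with
  | zero => simp
  | succ N ih =>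
      have h : a + ((N : ℕ) + 1 : ℕ) = (a + N) + 1 := by push_cast; ring
      rw [h]
      exact le_trans (hmono (a + N) (by omega)) ih

lemma tsum_shift' (hsum : ∑' k : ℤ, p k = 1) (x : ℤ) : ∑' y : ℤ, p (x - y) = 1 := by
  rw [← hsum]
  simpa using (Equiv.subLeft x).tsum_eq p

lemma conv_le_one (hsum : ∑' k : ℤ, p k = 1) {f : ℤ → ℝ≥0∞} (hf : ∀ y, f y ≤ 1) (x : ℤ) :
    conv p f x ≤ 1 := by
  calc conv p f x ≤ ∑' y : ℤ, p (x - y) * 1 :=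
        ENNReal.tsum_le_tsum fun y => mul_le_mul_right (hf y) _
    _ = 1 := by simpa using tsum_shift' hsum x

lemma tail_zero (f : ℤ → ℝ≥0∞) (c : ℤ) : tail f 0 c = ∑' x : ℤ, f x := by
  unfold tail
  exact tsum_congr fun x => if_pos (by positivity)

lemma tail_one (f : ℤ → ℝ≥0∞) (c : ℤ) : tail f 1 c = ∑' x : ℤ, if x = c then 0 else f x := by
  unfold tail
  refine tsum_congr fun x => ?_
  by_cases h : x = c
  · rw [if_neg (by rw [h]; simp), if_pos h]
  · rw [if_pos (by rw [Int.abs_eq_natAbs]; omega), if_neg h]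

lemma tsum_ite_le_nat (δ : ℕ → ℝ≥0∞) (N : ℕ) :
    (∑' j : ℕ, if (j : ℤ) ≤ (N : ℤ) then δ j else 0) = ∑ j ∈ Finset.range (N + 1), δ j := by
  rw [tsum_eq_sum (s := Finset.range (N + 1))
      (fun j hj => if_neg (by simp only [Finset.mem_range] at hj; omega))]
  exact Finset.sum_congr rfl fun j hj =>
    if_pos (by simp only [Finset.mem_range] at hj; omega)

lemma telescope {W : ℕ → ℝ≥0∞} (hW : ∀ j, W j ≤ W (j + 1)) (N : ℕ) :
    ∑ j ∈ Finset.range (N + 1), (if j = 0 then W 0 else W j - W (j - 1)) = W N := by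
  induction N with
  | zero => simp
  | succ N ih =>
      rw [Finset.sum_range_succ, ih, if_neg (Nat.succ_ne_zero N)]
      simpa using add_tsub_cancel_of_le (hW N)

lemma abs_toNat_cast (y : ℤ) : ((|y|.toNat : ℕ) : ℤ) = |y| :=
  Int.toNat_of_nonneg (abs_nonneg y)

lemma mono_weight {f g : ℤ → ℝ≥0∞} (W : ℕ → ℝ≥0∞) (hW : ∀ j, W j ≤ W (j + 1))
    (R : ∀ (k : ℕ) (c : ℤ), tail f k 0 ≤ tail g k c) (c : ℤ) :
    ∑' y : ℤ, f y * W (|y|.toNat) ≤ ∑' y : ℤ, g y * W (|y - c|.toNat) := by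
  set δ : ℕ → ℝ≥0∞ := fun j => if j = 0 then W 0 else W j - W (j - 1) with hδ
  have key : ∀ (h : ℤ → ℝ≥0∞) (c : ℤ),
      ∑' y : ℤ, h y * W (|y - c|.toNat) = ∑' j : ℕ, δ j * tail h j c := by
    intro h c
    have h1 : ∀ y : ℤ, h y * W (|y - c|.toNat)
        = ∑' j : ℕ, (if (j : ℤ) ≤ |y - c| then δ j * h y else 0) := by
      intro y
      have hw : W (|y - c|.toNat) = ∑' j : ℕ, (if (j : ℤ) ≤ |y - c| then δ j else 0) := by
        have : ∀ j : ℕ, ((j : ℤ) ≤ |y - c|) = ((j : ℤ) ≤ ((|y - c|.toNat : ℕ) : ℤ)) := by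
          intro j; rw [abs_toNat_cast]
        simp only [this]
        rw [tsum_ite_le_nat, telescope hW]
      rw [hw, ← ENNReal.tsum_mul_left]
      exact tsum_congr fun j => by rw [mul_ite, mul_zero, mul_comm]
    calc ∑' y : ℤ, h y * W (|y - c|.toNat)
        = ∑' y : ℤ, ∑' j : ℕ, (if (j : ℤ) ≤ |y - c| then δ j * h y else 0) := tsum_congr h1
      _ = ∑' j : ℕ, ∑' y : ℤ, (if (j : ℤ) ≤ |y - c| then δ j * h y else 0) := ENNReal.tsum_comm
      _ = ∑' j : ℕ, δ j * tail h j c := by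
          refine tsum_congr fun j => ?_
          rw [tail, ← ENNReal.tsum_mul_left]
          exact tsum_congr fun y => by rw [mul_ite, mul_zero]
  have hf0 : ∑' y : ℤ, f y * W (|y|.toNat) = ∑' j : ℕ, δ j * tail f j 0 := by
    rw [← key f 0]; simp
  rw [hf0, key g c]
  exact ENNReal.tsum_le_tsum fun j => mul_le_mul_right (R j c) _


/-- mass of `p` translated by `y`, outside window of radius `k-1` around 0 -/
def Qk (p : ℤ → ℝ≥0∞) (k : ℕ) (y : ℤ) : ℝ≥0∞ :=
  ∑' x : ℤ, if (k : ℤ) ≤ |x| then p (x - y) else 0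

lemma Qk_symm (hsymm : ∀ k : ℤ, p (-k) = p k) (k : ℕ) (y : ℤ) :
    Qk p k (-y) = Qk p k y := by
  unfold Qk
  rw [← (Equiv.neg ℤ).tsum_eq (fun x => if (k : ℤ) ≤ |x| then p (x - y) else 0)]
  refine tsum_congr fun x => ?_
  simp only [Equiv.neg_apply, abs_neg]
  by_cases h : (k : ℤ) ≤ |x|
  · rw [if_pos h, if_pos h]
    rw [show -x - y = -(x + y) by ring, hsymm, show x - -y = x + y by ring]
  · rw [if_neg h, if_neg h]

lemma Qk_abs (hsymm : ∀ k : ℤ, p (-k) = p k) (k : ℕ) (y : ℤ) :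
    Qk p k y = Qk p k ((|y|.toNat : ℕ) : ℤ) := by
  rw [abs_toNat_cast]
  rcases abs_choice y with h | h
  · rw [h]
  · rw [h, Qk_symm hsymm]

lemma ite_shift_identity (k : ℕ) (hk : 1 ≤ k) (v : ℤ → ℝ≥0∞) (x : ℤ) :
    (if (k : ℤ) ≤ |x| then v x else 0) + (if x = (k : ℤ) - 1 then v x else 0)
      = (if (k : ℤ) ≤ |x + 1| then v x else 0) + (if x = -(k : ℤ) then v x else 0) := by
  have h1 : ((k : ℤ) ≤ |x|) ↔ ((k : ℤ) ≤ x ∨ x ≤ -(k : ℤ)) := by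
    rw [Int.abs_eq_natAbs]; omega
  have h2 : ((k : ℤ) ≤ |x + 1|) ↔ ((k : ℤ) ≤ x + 1 ∨ x + 1 ≤ -(k : ℤ)) := by
    rw [Int.abs_eq_natAbs]; omega
  simp only [h1, h2]
  split_ifs <;> first | (exfalso; omega) | simp [add_comm]

lemma Qk_rec (k : ℕ) (hk : 1 ≤ k) (j : ℤ) :
    Qk p k j + p ((k : ℤ) - 1 - j) = Qk p k (j + 1) + p (-(k : ℤ) - j) := by
  have lhs : Qk p k j + p ((k : ℤ) - 1 - j)
      = ∑' x : ℤ, ((if (k : ℤ) ≤ |x| then p (x - j) else 0)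
          + (if x = (k : ℤ) - 1 then p (x - j) else 0)) := by
    rw [ENNReal.tsum_add]
    congr 1
    rw [tsum_eq_single ((k : ℤ) - 1) (fun b hb => if_neg hb), if_pos rfl]
  have rhs : Qk p k (j + 1) + p (-(k : ℤ) - j)
      = ∑' x : ℤ, ((if (k : ℤ) ≤ |x + 1| then p (x - j) else 0)
          + (if x = -(k : ℤ) then p (x - j) else 0)) := by
    rw [ENNReal.tsum_add]
    congr 1
    · unfold Qk
      rw [← (Equiv.addRight (1 : ℤ)).tsum_eq
          (fun x => if (k : ℤ) ≤ |x| then p (x - (j + 1)) else 0)]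
      refine tsum_congr fun x => ?_
      simp only [Equiv.coe_addRight]
      congr 2
      ring
    · rw [tsum_eq_single (-(k : ℤ)) (fun b hb => if_neg hb), if_pos rfl]
  rw [lhs, rhs]
  exact tsum_congr fun x => ite_shift_identity k hk (fun x => p (x - j)) x

lemma Qk_mono (hsum : ∑' k : ℤ, p k = 1) (hsymm : ∀ k : ℤ, p (-k) = p k)
    (hmono : ∀ k : ℤ, 1 ≤ k → p (k + 1) ≤ p k) (h03 : p 3 ≤ p 0)
    {k : ℕ} (hk : 2 ≤ k) (j : ℕ) :
    Qk p k ((j : ℕ) : ℤ) ≤ Qk p k (((j : ℕ) : ℤ) + 1) := by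
  have key : p (-(k : ℤ) - (j : ℤ)) ≤ p ((k : ℤ) - 1 - (j : ℤ)) := by
    have hsymm' : p (-(k : ℤ) - (j : ℤ)) = p ((k : ℤ) + (j : ℤ)) := by
      rw [show -(k : ℤ) - (j : ℤ) = -((k : ℤ) + j) by ring, hsymm]
    rw [hsymm']
    rcases lt_trichotomy ((k : ℤ) - 1 - (j : ℤ)) 0 with h | h | h
    · have : p ((k : ℤ) - 1 - (j : ℤ)) = p ((j : ℤ) + 1 - k) := by
        rw [show (k : ℤ) - 1 - (j : ℤ) = -((j : ℤ) + 1 - k) by ring, hsymm]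
      rw [this]
      exact mono_chain hmono _ _ (by omega) (by omega)
    · rw [show (k : ℤ) - 1 - (j : ℤ) = 0 from h]
      calc p ((k : ℤ) + (j : ℤ)) ≤ p 3 := mono_chain hmono _ _ (by norm_num) (by omega)
        _ ≤ p 0 := h03
    · exact mono_chain hmono _ _ (by omega) (by omega)
  have hrec := Qk_rec (p := p) k (by omega) ((j : ℕ) : ℤ)
  have hfin : p ((k : ℤ) - 1 - (j : ℤ)) ≠ ∞ := (p_le_one hsum _).trans_lt (by norm_num) |>.ne
  have step : Qk p k ((j : ℕ) : ℤ) + p ((k : ℤ) - 1 - (j : ℤ))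
      ≤ Qk p k (((j : ℕ) : ℤ) + 1) + p ((k : ℤ) - 1 - (j : ℤ)) :=
    hrec.le.trans (add_le_add_right key _)
  exact (ENNReal.add_le_add_iff_right hfin).mp step

lemma conv_tail_swap (p : ℤ → ℝ≥0∞) (h : ℤ → ℝ≥0∞) (k : ℕ) (c : ℤ) :
    tail (conv p h) k c = ∑' y : ℤ, h y * Qk p k (y - c) := by
  unfold tail conv
  calc ∑' x : ℤ, (if (k : ℤ) ≤ |x - c| then ∑' y : ℤ, p (x - y) * h y else 0)
      = ∑' x : ℤ, ∑' y : ℤ, (if (k : ℤ) ≤ |x - c| then p (x - y) * h y else 0) := by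
        refine tsum_congr fun x => ?_
        by_cases hcond : (k : ℤ) ≤ |x - c|
        · simp only [if_pos hcond]
        · simp only [if_neg hcond, tsum_zero]
    _ = ∑' y : ℤ, ∑' x : ℤ, (if (k : ℤ) ≤ |x - c| then p (x - y) * h y else 0) :=
        ENNReal.tsum_comm
    _ = ∑' y : ℤ, h y * Qk p k (y - c) := by
        refine tsum_congr fun y => ?_
        rw [show (Qk p k (y - c)) = ∑' x : ℤ, (if (k : ℤ) ≤ |x - c| then p (x - y) else 0) by
          unfold Qk
          rw [← (Equiv.subRight c).tsum_eq
              (fun x => if (k : ℤ) ≤ |x| then p (x - (y - c)) else 0)]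
          refine tsum_congr fun x => ?_
          simp only [Equiv.subRight_apply]
          congr 2
          ring]
        rw [← ENNReal.tsum_mul_left]
        exact tsum_congr fun x => by rw [mul_ite, mul_zero, mul_comm]

lemma conv_tail (hsum : ∑' k : ℤ, p k = 1) (hsymm : ∀ k : ℤ, p (-k) = p k)
    (hmono : ∀ k : ℤ, 1 ≤ k → p (k + 1) ≤ p k) (h03 : p 3 ≤ p 0)
    {f g : ℤ → ℝ≥0∞} (R : ∀ (k : ℕ) (c : ℤ), tail f k 0 ≤ tail g k c)
    {k : ℕ} (hk : 2 ≤ k) (c : ℤ) :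
    tail (conv p f) k 0 ≤ tail (conv p g) k c := by
  rw [conv_tail_swap, conv_tail_swap]
  have e1 : ∀ y : ℤ, Qk p k (y - 0) = Qk p k (((|y|.toNat : ℕ)) : ℤ) := by
    intro y; rw [sub_zero, Qk_abs hsymm]
  have e2 : ∀ y : ℤ, Qk p k (y - c) = Qk p k (((|y - c|.toNat : ℕ)) : ℤ) := fun y =>
    Qk_abs hsymm k (y - c)
  calc ∑' y : ℤ, f y * Qk p k (y - 0)
      = ∑' y : ℤ, f y * Qk p k (((|y|.toNat : ℕ)) : ℤ) := tsum_congr fun y => by rw [e1]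
    _ ≤ ∑' y : ℤ, g y * Qk p k (((|y - c|.toNat : ℕ)) : ℤ) :=
        mono_weight (fun j => Qk p k ((j : ℕ) : ℤ))
          (fun j => by exact_mod_cast Qk_mono hsum hsymm hmono h03 hk j) R c
    _ = ∑' y : ℤ, g y * Qk p k (y - c) := tsum_congr fun y => by rw [e2]


/-- the weight `1 - p(y)`, written without subtraction -/
def wt (p : ℤ → ℝ≥0∞) (y : ℤ) : ℝ≥0∞ := ∑' x : ℤ, if x = 0 then 0 else p (x - y)

lemma tsum_split (f : ℤ → ℝ≥0∞) (a : ℤ) :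
    ∑' x : ℤ, f x = f a + ∑' x : ℤ, (if x = a then 0 else f x) := by
  have h1 : ∀ x : ℤ, f x = (if x = a then f x else 0) + (if x = a then 0 else f x) := by
    intro x; by_cases h : x = a <;> simp [h]
  calc ∑' x : ℤ, f x
      = ∑' x : ℤ, ((if x = a then f x else 0) + (if x = a then 0 else f x)) := tsum_congr h1
    _ = (∑' x : ℤ, (if x = a then f x else 0)) + ∑' x : ℤ, (if x = a then 0 else f x) :=
        ENNReal.tsum_add
    _ = f a + ∑' x : ℤ, (if x = a then 0 else f x) := by
        congr 1
        rw [tsum_eq_single a (fun b hb => if_neg hb), if_pos rfl]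

lemma wt_add_p (hsum : ∑' k : ℤ, p k = 1) (hsymm : ∀ k : ℤ, p (-k) = p k) (y : ℤ) :
    wt p y + p y = 1 := by
  have h := (tsum_split (fun x : ℤ => p (x - y)) 0).symm
  calc wt p y + p y
      = p (0 - y) + ∑' x : ℤ, (if x = 0 then 0 else p (x - y)) := by
        rw [wt, zero_sub, hsymm, add_comm]
    _ = ∑' x : ℤ, p (x - y) := h
    _ = 1 := tsum_shift hsum y

lemma wt_fin (hsum : ∑' k : ℤ, p k = 1) (hsymm : ∀ k : ℤ, p (-k) = p k) (y : ℤ) :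
    wt p y ≤ 1 :=
  le_trans (le_add_right le_rfl) (wt_add_p hsum hsymm y).le

lemma wt_symm (hsum : ∑' k : ℤ, p k = 1) (hsymm : ∀ k : ℤ, p (-k) = p k) (y : ℤ) :
    wt p (-y) = wt p y := by
  have h1 := wt_add_p hsum hsymm y
  have h2 := wt_add_p hsum hsymm (-y)
  rw [hsymm] at h2
  have hfin : p y ≠ ∞ := ((p_le_one hsum y).trans_lt (by norm_num)).ne
  have := h2.trans h1.symm
  exact ENNReal.add_left_inj hfin |>.mp this

lemma wt_mono (hsum : ∑' k : ℤ, p k = 1) (hsymm : ∀ k : ℤ, p (-k) = p k)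
    (hmono : ∀ k : ℤ, 1 ≤ k → p (k + 1) ≤ p k) {j : ℤ} (hj : 1 ≤ j) :
    wt p j ≤ wt p (j + 1) := by
  have h1 := wt_add_p hsum hsymm j
  have h2 := wt_add_p hsum hsymm (j + 1)
  have hfin : p j ≠ ∞ := ((p_le_one hsum j).trans_lt (by norm_num)).ne
  have step : wt p j + p j ≤ wt p (j + 1) + p j := by
    rw [h1]
    rw [← h2]
    exact add_le_add_right (hmono j hj) _
  exact (ENNReal.add_le_add_iff_right hfin).mp step

/-- monotone envelope of `wt` as function of `|y|` -/
def Wn (p : ℤ → ℝ≥0∞) (j : ℕ) : ℝ≥0∞ :=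
  if j = 0 then min (wt p 0) (wt p 1) else wt p ((j : ℕ) : ℤ)

lemma Wn_mono (hsum : ∑' k : ℤ, p k = 1) (hsymm : ∀ k : ℤ, p (-k) = p k)
    (hmono : ∀ k : ℤ, 1 ≤ k → p (k + 1) ≤ p k) (j : ℕ) :
    Wn p j ≤ Wn p (j + 1) := by
  unfold Wn
  rcases Nat.eq_zero_or_pos j with h | h
  · subst h
    simp only [if_pos rfl, if_neg (Nat.one_ne_zero)]
    exact min_le_right _ _
  · rw [if_neg (by omega), if_neg (by omega)]
    have : (((j + 1 : ℕ)) : ℤ) = ((j : ℕ) : ℤ) + 1 := by push_cast; ring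
    rw [this]
    exact wt_mono hsum hsymm hmono (by exact_mod_cast h)

lemma wt_eq_Wn (hsum : ∑' k : ℤ, p k = 1) (hsymm : ∀ k : ℤ, p (-k) = p k) (y : ℤ) :
    wt p y = Wn p (|y|.toNat) + (if y = 0 then wt p 0 - min (wt p 0) (wt p 1) else 0) := by
  by_cases h : y = 0
  · subst h
    rw [if_pos rfl]
    have h2 : Wn p (|(0:ℤ)|.toNat) = min (wt p 0) (wt p 1) := by norm_num [Wn]
    rw [h2, add_tsub_cancel_of_le (min_le_left _ _)]
  · rw [if_neg h, add_zero, Wn, if_neg (by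
      intro hcontra
      apply h
      have := abs_toNat_cast y
      rw [hcontra] at this
      simpa using (abs_eq_zero.mp this.symm))]
    have : wt p ((|y|.toNat : ℕ) : ℤ) = wt p |y| := by rw [abs_toNat_cast]
    rw [this]
    rcases abs_choice y with h2 | h2
    · rw [h2]
    · rw [h2, wt_symm hsum hsymm]

lemma star_swap (p : ℤ → ℝ≥0∞) (h : ℤ → ℝ≥0∞) (s : ℤ) :
    ∑' x : ℤ, (if x = s then 0 else conv p h x) = ∑' y : ℤ, h y * wt p (y - s) := by
  unfold conv
  calc ∑' x : ℤ, (if x = s then 0 else ∑' y : ℤ, p (x - y) * h y)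
      = ∑' x : ℤ, ∑' y : ℤ, (if x = s then 0 else p (x - y) * h y) := by
        refine tsum_congr fun x => ?_
        by_cases hc : x = s
        · simp only [if_pos hc, tsum_zero]
        · simp only [if_neg hc]
    _ = ∑' y : ℤ, ∑' x : ℤ, (if x = s then 0 else p (x - y) * h y) := ENNReal.tsum_comm
    _ = ∑' y : ℤ, h y * wt p (y - s) := by
        refine tsum_congr fun y => ?_
        rw [show wt p (y - s) = ∑' x : ℤ, (if x = s then 0 else p (x - y)) by
          unfold wt
          rw [← (Equiv.subRight s).tsum_eq
              (fun x => if x = 0 then 0 else p (x - (y - s)))]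
          refine tsum_congr fun x => ?_
          simp only [Equiv.subRight_apply, sub_eq_zero]
          by_cases hc : x = s
          · rw [if_pos hc, if_pos hc]
          · rw [if_neg hc, if_neg hc]
            congr 1
            ring]
        rw [← ENNReal.tsum_mul_left]
        refine tsum_congr fun x => ?_
        by_cases hc : x = s
        · rw [if_pos hc, if_pos hc, mul_zero]
        · rw [if_neg hc, if_neg hc, mul_comm]

lemma star (hsum : ∑' k : ℤ, p k = 1) (hsymm : ∀ k : ℤ, p (-k) = p k)
    (hmono : ∀ k : ℤ, 1 ≤ k → p (k + 1) ≤ p k)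
    {f g : ℤ → ℝ≥0∞} (s : ℤ) (hf1 : f 0 = 1) (hg1 : g s = 1)
    (R : ∀ (k : ℕ) (c : ℤ), tail f k 0 ≤ tail g k c) :
    ∑' x : ℤ, (if x = 0 then 0 else conv p f x) ≤ ∑' x : ℤ, (if x = s then 0 else conv p g x) := by
  set α := wt p 0 - min (wt p 0) (wt p 1) with hα
  have split : ∀ (h : ℤ → ℝ≥0∞) (c : ℤ), h c = 1 →
      ∑' y : ℤ, h y * wt p (y - c) = (∑' y : ℤ, h y * Wn p (|y - c|.toNat)) + α := by
    intro h c hc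
    calc ∑' y : ℤ, h y * wt p (y - c)
        = ∑' y : ℤ, (h y * Wn p (|y - c|.toNat) + h y * (if y - c = 0 then α else 0)) := by
          refine tsum_congr fun y => ?_
          rw [wt_eq_Wn hsum hsymm (y - c), mul_add]
      _ = (∑' y : ℤ, h y * Wn p (|y - c|.toNat)) + ∑' y : ℤ, h y * (if y - c = 0 then α else 0) :=
          ENNReal.tsum_add
      _ = (∑' y : ℤ, h y * Wn p (|y - c|.toNat)) + α := by
          congr 1
          rw [tsum_eq_single c (fun b hb => by rw [if_neg (by omega), mul_zero])]
          rw [if_pos (by omega), hc, one_mul]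
  rw [star_swap p f 0, star_swap p g s, split f 0 hf1, split g s hg1]
  refine add_le_add_left ?_ α
  have base : ∑' y : ℤ, f y * Wn p (|y - 0|.toNat) = ∑' y : ℤ, f y * Wn p (|y|.toNat) := by
    refine tsum_congr fun y => by rw [sub_zero]
  rw [base]
  exact mono_weight (Wn p) (Wn_mono hsum hsymm hmono) R s


/-- death-probability profile for trap field `Tr` -/
def DD (p : ℤ → ℝ≥0∞) (Tr : ℕ → ℤ → Prop) : ℕ → ℤ → ℝ≥0∞
  | 0 => fun x => if Tr 0 x then 1 else 0
  | (m + 1) => fun x => if Tr (m + 1) x then 1 else conv p (DD p Tr m) x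

lemma DD_zero (Tr : ℕ → ℤ → Prop) (x : ℤ) :
    DD p Tr 0 x = if Tr 0 x then 1 else 0 := rfl

lemma DD_succ (Tr : ℕ → ℤ → Prop) (m : ℕ) (x : ℤ) :
    DD p Tr (m + 1) x = if Tr (m + 1) x then 1 else conv p (DD p Tr m) x := rfl

lemma DD_le_one (hsum : ∑' k : ℤ, p k = 1) (Tr : ℕ → ℤ → Prop) :
    ∀ m x, DD p Tr m x ≤ 1 := by
  intro m
  induction m with
  | zero =>
      intro x
      rw [DD_zero]
      split_ifs <;> simp
  | succ m ih =>
      intro x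
      rw [DD_succ]
      split_ifs with h
      · exact le_rfl
      · exact conv_le_one hsum ih x

lemma DD_trap (Tr : ℕ → ℤ → Prop) {m : ℕ} {x : ℤ} (h : Tr m x) : DD p Tr m x = 1 := by
  cases m with
  | zero => rw [DD_zero, if_pos h]
  | succ m => rw [DD_succ, if_pos h]

lemma conv_le_DD_succ (hsum : ∑' k : ℤ, p k = 1) (Tr : ℕ → ℤ → Prop) (m : ℕ) (x : ℤ) :
    conv p (DD p Tr m) x ≤ DD p Tr (m + 1) x := by
  rw [DD_succ]
  split_ifs with h
  · exact conv_le_one hsum (DD_le_one hsum Tr m) x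
  · exact le_rfl

/-- the fixed trap at the origin -/
def Tr0 : ℕ → ℤ → Prop := fun _ x => x = 0

/-- the moving pair trap along `φ` -/
def Trph (φ : ℕ → ℤ) : ℕ → ℤ → Prop := fun l x => x = φ l ∨ x = φ (l + 1)

lemma Tr0_iff (l : ℕ) (x : ℤ) : Tr0 l x ↔ x = 0 := Iff.rfl

lemma Trph_iff (φ : ℕ → ℤ) (l : ℕ) (x : ℤ) :
    Trph φ l x ↔ (x = φ l ∨ x = φ (l + 1)) := Iff.rfl

theorem main_R (hsum : ∑' k : ℤ, p k = 1) (hsymm : ∀ k : ℤ, p (-k) = p k)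
    (hmono : ∀ k : ℤ, 1 ≤ k → p (k + 1) ≤ p k) (h03 : p 3 ≤ p 0) (φ : ℕ → ℤ) :
    ∀ (m : ℕ) (k : ℕ) (c : ℤ),
      tail (DD p Tr0 m) k 0 ≤ tail (DD p (Trph φ) m) k c := by
  intro m
  induction m with
  | zero =>
      intro k c
      rcases Nat.eq_zero_or_pos k with hk | hk
      · subst hk
        rw [tail_zero, tail_zero]
        calc ∑' x : ℤ, DD p Tr0 0 x
            = 1 := by
              rw [show (∑' x : ℤ, DD p Tr0 0 x) = ∑' x : ℤ, (if x = 0 then (1:ℝ≥0∞) else 0) from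
                tsum_congr fun x => by rw [DD_zero]; exact if_congr Iff.rfl rfl rfl]
              rw [tsum_eq_single 0 (fun b hb => if_neg hb), if_pos rfl]
          _ = DD p (Trph φ) 0 (φ 0) := (DD_trap (Trph φ) (Or.inl rfl)).symm
          _ ≤ ∑' x : ℤ, DD p (Trph φ) 0 x := ENNReal.le_tsum _
      · have hz : tail (DD p Tr0 0) k 0 = 0 := by
          unfold tail
          refine ENNReal.tsum_eq_zero.mpr fun x => ?_
          by_cases h : (k : ℤ) ≤ |x - 0|
          · rw [if_pos h, DD_zero, if_neg ?_]
            intro hx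
            have hx0 : x = 0 := hx
            rw [sub_zero, hx0] at h
            simp at h
            omega
          · rw [if_neg h]
        rw [hz]
        exact zero_le
  | succ m ih =>
      have hE0 : DD p Tr0 (m + 1) 0 = 1 := DD_trap Tr0 rfl
      have hDs : DD p (Trph φ) (m + 1) (φ (m + 1)) = 1 := DD_trap (Trph φ) (Or.inl rfl)
      have hEm0 : DD p Tr0 m 0 = 1 := DD_trap Tr0 rfl
      have hDms : DD p (Trph φ) m (φ (m + 1)) = 1 := DD_trap (Trph φ) (Or.inr rfl)
      -- totals
      have htot : ∑' x : ℤ, DD p Tr0 (m + 1) x ≤ ∑' x : ℤ, DD p (Trph φ) (m + 1) x := by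
        have hL : ∑' x : ℤ, DD p Tr0 (m + 1) x
            = 1 + ∑' x : ℤ, (if x = 0 then 0 else conv p (DD p Tr0 m) x) := by
          rw [tsum_split (fun x => DD p Tr0 (m + 1) x) 0, hE0]
          congr 1
          refine tsum_congr fun x => ?_
          by_cases h : x = 0
          · rw [if_pos h, if_pos h]
          · rw [if_neg h, if_neg h, DD_succ]
            exact if_neg (fun hx => h hx)
        have hR : 1 + ∑' x : ℤ, (if x = φ (m + 1) then 0 else conv p (DD p (Trph φ) m) x)
            ≤ ∑' x : ℤ, DD p (Trph φ) (m + 1) x := by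
          rw [tsum_split (fun x => DD p (Trph φ) (m + 1) x) (φ (m + 1)), hDs]
          refine add_le_add_right (ENNReal.tsum_le_tsum fun x => ?_) 1
          by_cases h : x = φ (m + 1)
          · rw [if_pos h, if_pos h]
          · rw [if_neg h, if_neg h]
            exact conv_le_DD_succ hsum (Trph φ) m x
        calc ∑' x : ℤ, DD p Tr0 (m + 1) x
            = 1 + ∑' x : ℤ, (if x = 0 then 0 else conv p (DD p Tr0 m) x) := hL
          _ ≤ 1 + ∑' x : ℤ, (if x = φ (m + 1) then 0 else conv p (DD p (Trph φ) m) x) :=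
              add_le_add_right (star hsum hsymm hmono (φ (m + 1)) hEm0 hDms ih) 1
          _ ≤ ∑' x : ℤ, DD p (Trph φ) (m + 1) x := hR
      intro k c
      match k with
      | 0 => rw [tail_zero, tail_zero]; exact htot
      | 1 =>
          have hL : 1 + tail (DD p Tr0 (m + 1)) 1 0 = ∑' x : ℤ, DD p Tr0 (m + 1) x := by
            rw [tail_one, tsum_split (fun x => DD p Tr0 (m + 1) x) 0, hE0]
          have hR : ∑' x : ℤ, DD p (Trph φ) (m + 1) x
              ≤ 1 + tail (DD p (Trph φ) (m + 1)) 1 c := by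
            rw [tail_one, tsum_split (fun x => DD p (Trph φ) (m + 1) x) c]
            exact add_le_add_left (DD_le_one hsum (Trph φ) (m + 1) c) _
          have hcomb := hL.le.trans (htot.trans hR)
          exact (ENNReal.add_le_add_iff_left (by norm_num)).mp hcomb
      | (Nat.succ (Nat.succ k')) =>
          have hk : 2 ≤ k' + 2 := by omega
          have hL : tail (DD p Tr0 (m + 1)) (k' + 2) 0
              = tail (conv p (DD p Tr0 m)) (k' + 2) 0 := by
            unfold tail
            refine tsum_congr fun x => ?_
            by_cases h : ((k' + 2 : ℕ) : ℤ) ≤ |x - 0|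
            · rw [if_pos h, if_pos h, DD_succ, if_neg ?_]
              intro hx
              have hx0 : x = 0 := hx
              rw [sub_zero, hx0] at h
              simp at h
              omega
            · rw [if_neg h, if_neg h]
          rw [show (Nat.succ (Nat.succ k')) = k' + 2 from rfl, hL]
          calc tail (conv p (DD p Tr0 m)) (k' + 2) 0
              ≤ tail (conv p (DD p (Trph φ) m)) (k' + 2) c :=
                conv_tail hsum hsymm hmono h03 ih hk c
            _ ≤ tail (DD p (Trph φ) (m + 1)) (k' + 2) c := by
                unfold tail
                refine ENNReal.tsum_le_tsum fun x => ?_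
                by_cases h : ((k' + 2 : ℕ) : ℤ) ≤ |x - c|
                · rw [if_pos h, if_pos h]
                  exact conv_le_DD_succ hsum (Trph φ) m x
                · rw [if_neg h, if_neg h]


/-- partial sum of the first `l` coordinates -/
def psum {m : ℕ} (u : Fin m → ℤ) (l : ℕ) : ℤ :=
  ∑ i : Fin m, if (i : ℕ) < l then u i else 0

lemma psum_snoc {m : ℕ} (w : Fin m → ℤ) (a : ℤ) {l : ℕ} (hl : l ≤ m) :
    psum (Fin.snoc w a) l = psum w l := by
  unfold psum
  rw [Fin.sum_univ_castSucc]
  simp only [Fin.snoc_castSucc, Fin.coe_castSucc, Fin.snoc_last, Fin.val_last]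
  rw [if_neg (by omega), add_zero]

lemma psum_snoc_top {m : ℕ} (w : Fin m → ℤ) (a : ℤ) :
    psum (Fin.snoc w a) (m + 1) = psum w m + a := by
  unfold psum
  rw [Fin.sum_univ_castSucc]
  simp only [Fin.snoc_castSucc, Fin.coe_castSucc, Fin.snoc_last, Fin.val_last]
  rw [if_pos (by omega)]
  congr 1
  refine Finset.sum_congr rfl fun i _ => ?_
  have hi := i.isLt
  rw [if_pos (by omega), if_pos (by omega)]

/-- the survival-and-endpoint condition on the increment tuple -/
def QQ (Tr : ℕ → ℤ → Prop) (m : ℕ) (z x : ℤ) (u : Fin m → ℤ) : Prop :=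
  z + psum u m = x ∧ ∀ l ≤ m, ¬ Tr l (z + psum u l)

/-- the probability of survival with endpoint `x`, as a combinatorial sum -/
def AA (p : ℤ → ℝ≥0∞) (Tr : ℕ → ℤ → Prop) (m : ℕ) (z x : ℤ) : ℝ≥0∞ :=
  ∑' u : Fin m → ℤ, if QQ Tr m z x u then ∏ i, p (u i) else 0

/-- the survival density -/
def GG (p : ℤ → ℝ≥0∞) (Tr : ℕ → ℤ → Prop) (m : ℕ) (x : ℤ) : ℝ≥0∞ :=
  ∑' z : ℤ, AA p Tr m z x

lemma forall_le_succ {P : ℕ → Prop} (m : ℕ) :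
    (∀ l ≤ m + 1, P l) ↔ (∀ l ≤ m, P l) ∧ P (m + 1) := by
  constructor
  · intro h; exact ⟨fun l hl => h l (by omega), h (m + 1) le_rfl⟩
  · rintro ⟨h1, h2⟩ l hl
    rcases eq_or_lt_of_le hl with rfl | h
    · exact h2
    · exact h1 l (by omega)

lemma AA_zero (Tr : ℕ → ℤ → Prop) (z x : ℤ) :
    AA p Tr 0 z x = if (z = x ∧ ¬ Tr 0 z) then 1 else 0 := by
  unfold AA
  have hu : ∀ u : Fin 0 → ℤ, u = (fun i : Fin 0 => i.elim0) := fun u => funext fun i => i.elim0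
  rw [tsum_eq_single (fun i : Fin 0 => i.elim0) (fun b hb => absurd (hu b) hb)]
  have hq : QQ Tr 0 z x (fun i : Fin 0 => i.elim0) ↔ (z = x ∧ ¬ Tr 0 z) := by
    unfold QQ psum
    simp only [Finset.univ_eq_empty, Finset.sum_empty, add_zero]
    constructor
    · rintro ⟨h1, h2⟩; exact ⟨h1, h2 0 le_rfl⟩
    · rintro ⟨h1, h2⟩
      refine ⟨h1, fun l hl => ?_⟩
      rw [Nat.le_zero.mp hl]
      exact h2
  rw [if_congr hq rfl rfl]
  simp

lemma AA_succ (Tr : ℕ → ℤ → Prop) (m : ℕ) (z x : ℤ) :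
    AA p Tr (m + 1) z x
      = if Tr (m + 1) x then 0 else ∑' a : ℤ, p a * AA p Tr m z (x - a) := by
  by_cases hT : Tr (m + 1) x
  · rw [if_pos hT]
    unfold AA
    refine ENNReal.tsum_eq_zero.mpr fun u => ?_
    refine if_neg fun hQ => ?_
    exact (hQ.1 ▸ hQ.2 (m + 1) le_rfl) hT
  · rw [if_neg hT]
    unfold AA
    rw [← (Fin.snocEquiv (fun _ : Fin (m + 1) => ℤ)).tsum_eq
        (fun u => if QQ Tr (m + 1) z x u then ∏ i, p (u i) else 0)]
    rw [ENNReal.tsum_prod']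
    have term : ∀ (a : ℤ) (w : Fin m → ℤ),
        (if QQ Tr (m + 1) z x (Fin.snoc w a : Fin (m + 1) → ℤ)
            then ∏ i, p ((Fin.snoc w a : Fin (m + 1) → ℤ) i) else 0)
          = (if QQ Tr m z (x - a) w then ∏ i, p (w i) else 0) * p a := by
      intro a w
      have hprod : (∏ i, p ((Fin.snoc w a : Fin (m + 1) → ℤ) i)) = (∏ i, p (w i)) * p a := by
        rw [Fin.prod_univ_castSucc]
        simp only [Fin.snoc_castSucc, Fin.snoc_last]
      have hiff : QQ Tr (m + 1) z x (Fin.snoc w a : Fin (m + 1) → ℤ) ↔ QQ Tr m z (x - a) w := by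
        unfold QQ
        rw [psum_snoc_top, forall_le_succ (P := fun l => ¬ Tr l (z + psum (Fin.snoc w a) l))]
        constructor
        · rintro ⟨h1, h2, _⟩
          refine ⟨by omega, fun l hl => ?_⟩
          have := h2 l hl
          rwa [psum_snoc w a hl] at this
        · rintro ⟨h1, h2⟩
          refine ⟨by omega, fun l hl => ?_, ?_⟩
          · rw [psum_snoc w a hl]; exact h2 l hl
          · rw [psum_snoc_top]
            intro hcon
            exact hT (by rwa [show z + (psum w m + a) = x by omega] at hcon)
      rw [if_congr hiff hprod rfl, ite_mul, zero_mul]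
    calc ∑' (a : ℤ) (w : Fin m → ℤ),
          (if QQ Tr (m + 1) z x ((Fin.snocEquiv (fun _ : Fin (m + 1) => ℤ)) (a, w))
            then ∏ i, p ((Fin.snocEquiv (fun _ : Fin (m + 1) => ℤ)) (a, w) i) else 0)
        = ∑' (a : ℤ) (w : Fin m → ℤ),
            (if QQ Tr m z (x - a) w then ∏ i, p (w i) else 0) * p a := by
          refine tsum_congr fun a => tsum_congr fun w => ?_
          exact term a w
      _ = ∑' a : ℤ, p a * AA p Tr m z (x - a) := by
          refine tsum_congr fun a => ?_
          rw [ENNReal.tsum_mul_right, mul_comm]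
          rfl

lemma GG_zero (Tr : ℕ → ℤ → Prop) (x : ℤ) :
    GG p Tr 0 x = if Tr 0 x then 0 else 1 := by
  unfold GG
  calc ∑' z : ℤ, AA p Tr 0 z x
      = ∑' z : ℤ, (if (z = x ∧ ¬ Tr 0 z) then 1 else 0) := tsum_congr fun z => AA_zero Tr z x
    _ = if Tr 0 x then 0 else 1 := by
        rw [tsum_eq_single x (fun b hb => if_neg (fun h => hb h.1))]
        by_cases hT : Tr 0 x
        · rw [if_pos hT, if_neg (fun h => h.2 hT)]
        · rw [if_neg hT, if_pos ⟨rfl, hT⟩]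

lemma GG_succ (hsum : ∑' k : ℤ, p k = 1) (Tr : ℕ → ℤ → Prop) (m : ℕ) (x : ℤ) :
    GG p Tr (m + 1) x
      = if Tr (m + 1) x then 0 else ∑' y : ℤ, p (x - y) * GG p Tr m y := by
  unfold GG
  rw [show (∑' z : ℤ, AA p Tr (m + 1) z x)
      = ∑' z : ℤ, (if Tr (m + 1) x then 0 else ∑' a : ℤ, p a * AA p Tr m z (x - a)) from
    tsum_congr fun z => AA_succ Tr m z x]
  by_cases hT : Tr (m + 1) x
  · simp only [if_pos hT, tsum_zero]
  · simp only [if_neg hT]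
    calc ∑' (z : ℤ) (a : ℤ), p a * AA p Tr m z (x - a)
        = ∑' (a : ℤ) (z : ℤ), p a * AA p Tr m z (x - a) := ENNReal.tsum_comm
      _ = ∑' a : ℤ, p a * ∑' z : ℤ, AA p Tr m z (x - a) := by
          refine tsum_congr fun a => ?_
          rw [ENNReal.tsum_mul_left]
      _ = ∑' y : ℤ, p (x - y) * ∑' z : ℤ, AA p Tr m z (x - (x - y)) :=
          ((Equiv.subLeft x).tsum_eq (fun a => p a * ∑' z : ℤ, AA p Tr m z (x - a))).symm
      _ = ∑' y : ℤ, p (x - y) * ∑' z : ℤ, AA p Tr m z y := by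
          refine tsum_congr fun y => ?_
          rw [sub_sub_cancel]

lemma GG_le_one (hsum : ∑' k : ℤ, p k = 1) (Tr : ℕ → ℤ → Prop) :
    ∀ m x, GG p Tr m x ≤ 1 := by
  intro m
  induction m with
  | zero =>
      intro x
      rw [GG_zero]
      split_ifs <;> simp
  | succ m ih =>
      intro x
      rw [GG_succ hsum]
      split_ifs with h
      · simp
      · calc ∑' y : ℤ, p (x - y) * GG p Tr m y
            ≤ ∑' y : ℤ, p (x - y) * 1 :=
              ENNReal.tsum_le_tsum fun y => mul_le_mul_right (ih y) _
          _ = 1 := by simpa using tsum_shift' hsum x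

lemma tsum_sub' {f g : ℤ → ℝ≥0∞} (hg : ∑' x : ℤ, g x ≠ ∞) (hle : ∀ x, g x ≤ f x) :
    ∑' x : ℤ, (f x - g x) = ∑' x : ℤ, f x - ∑' x : ℤ, g x := by
  have h1 : ∑' x : ℤ, f x = (∑' x : ℤ, (f x - g x)) + ∑' x : ℤ, g x := by
    rw [← ENNReal.tsum_add]
    exact tsum_congr fun x => (tsub_add_cancel_of_le (hle x)).symm
  exact (ENNReal.sub_eq_of_eq_add hg h1).symm

lemma DD_eq_one_sub_GG (hsum : ∑' k : ℤ, p k = 1) (Tr : ℕ → ℤ → Prop) :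
    ∀ m x, DD p Tr m x = 1 - GG p Tr m x := by
  intro m
  induction m with
  | zero =>
      intro x
      rw [DD_zero, GG_zero]
      split_ifs <;> simp
  | succ m ih =>
      intro x
      rw [DD_succ, GG_succ hsum]
      split_ifs with h
      · simp
      · have hfin : ∀ y : ℤ, p (x - y) ≠ ∞ :=
          fun y => ((p_le_one hsum _).trans_lt (by norm_num)).ne
        have hterm : ∀ y : ℤ, p (x - y) * (1 - GG p Tr m y)
            = p (x - y) - p (x - y) * GG p Tr m y := by
          intro y
          have h2 : p (x - y) = p (x - y) * (1 - GG p Tr m y) + p (x - y) * GG p Tr m y := by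
            rw [← mul_add, tsub_add_cancel_of_le (GG_le_one hsum Tr m y), mul_one]
          exact (ENNReal.sub_eq_of_eq_add
            (ne_top_of_le_ne_top (hfin y) (mul_le_of_le_one_right' (GG_le_one hsum Tr m y)))
            h2).symm
        have hsub : ∑' y : ℤ, p (x - y) * GG p Tr m y ≤ 1 := by
          calc ∑' y : ℤ, p (x - y) * GG p Tr m y
              ≤ ∑' y : ℤ, p (x - y) * 1 :=
                ENNReal.tsum_le_tsum fun y => mul_le_mul_right (GG_le_one hsum Tr m y) _
            _ = 1 := by simpa using tsum_shift' hsum x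
        calc conv p (DD p Tr m) x
            = ∑' y : ℤ, p (x - y) * (1 - GG p Tr m y) := by
              unfold conv
              exact tsum_congr fun y => by rw [ih y]
          _ = ∑' y : ℤ, (p (x - y) - p (x - y) * GG p Tr m y) := tsum_congr hterm
          _ = (∑' y : ℤ, p (x - y)) - ∑' y : ℤ, p (x - y) * GG p Tr m y :=
              tsum_sub' (by exact (hsub.trans_lt (by norm_num)).ne)
                (fun y => mul_le_of_le_one_right' (GG_le_one hsum Tr m y))
          _ = 1 - ∑' y : ℤ, p (x - y) * GG p Tr m y := by rw [tsum_shift' hsum x]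


section Meas

variable {Ω : Type*} [MeasurableSpace Ω] {μ : Measure Ω} {ξ : ℕ → Ω → ℤ}

lemma meas_tuple [IsProbabilityMeasure μ] (hmeas : ∀ i, Measurable (ξ i))
    (hindep : iIndepFun ξ μ)
    (hlaw : ∀ i k, μ {ω | ξ i ω = k} = p k) (m : ℕ) (u : Fin m → ℤ) :
    μ {ω | (fun i : Fin m => ξ i ω) = u} = ∏ i, p (u i) := by
  set v : ℕ → ℤ := fun n => if h : n < m then u ⟨n, h⟩ else 0 with hv
  have hset : {ω | (fun i : Fin m => ξ i ω) = u} = ⋂ i ∈ Finset.range m, ξ i ⁻¹' {v i} := by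
    ext ω
    simp only [Set.mem_setOf_eq, funext_iff, Set.mem_iInter, Set.mem_preimage,
      Set.mem_singleton_iff, Finset.mem_range]
    constructor
    · intro h i hi
      rw [hv]
      dsimp only
      rw [dif_pos hi]
      exact h ⟨i, hi⟩
    · intro h i
      have h2 := h i i.isLt
      rw [hv] at h2
      dsimp only at h2
      rwa [dif_pos i.isLt] at h2
  rw [hset, hindep.measure_inter_preimage_eq_mul (Finset.range m)
      (fun i _ => measurableSet_singleton (v i))]
  have hμ : ∀ i, μ (ξ i ⁻¹' {v i}) = p (v i) := fun i => hlaw i (v i)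
  rw [Finset.prod_congr rfl (fun i _ => hμ i),
    ← Fin.prod_univ_eq_prod_range (fun i => p (v i)) m]
  refine Finset.prod_congr rfl fun i _ => ?_
  rw [hv]
  dsimp only
  rw [dif_pos i.isLt]

lemma decomp [IsProbabilityMeasure μ] (hmeas : ∀ i, Measurable (ξ i))
    (hindep : iIndepFun ξ μ)
    (hlaw : ∀ i k, μ {ω | ξ i ω = k} = p k) (m : ℕ) (Q : (Fin m → ℤ) → Prop) :
    μ {ω | Q (fun i : Fin m => ξ i ω)}
      = ∑' u : Fin m → ℤ, if Q u then ∏ i, p (u i) else 0 := by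
  have hset : {ω | Q (fun i : Fin m => ξ i ω)}
      = ⋃ u : Fin m → ℤ, if Q u then {ω | (fun i : Fin m => ξ i ω) = u} else ∅ := by
    ext ω
    simp only [Set.mem_setOf_eq, Set.mem_iUnion]
    constructor
    · intro h
      refine ⟨fun i => ξ i ω, ?_⟩
      rw [if_pos h]
      exact rfl
    · rintro ⟨u, hu⟩
      by_cases hq : Q u
      · rw [if_pos hq] at hu
        have h2 : (fun i : Fin m => ξ i ω) = u := hu
        rw [h2]
        exact hq
      · rw [if_neg hq] at hu
        exact absurd hu (Set.notMem_empty ω)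
  have hmeasu : ∀ u : Fin m → ℤ, MeasurableSet {ω | (fun i : Fin m => ξ i ω) = u} := by
    intro u
    have h2 : {ω | (fun i : Fin m => ξ i ω) = u} = ⋂ i : Fin m, {ω | ξ i ω = u i} := by
      ext ω
      simp [funext_iff]
    rw [h2]
    exact MeasurableSet.iInter fun i => hmeas i (measurableSet_singleton (u i))
  rw [hset, measure_iUnion ?_ ?_]
  · exact tsum_congr fun u => by
      by_cases hq : Q u
      · rw [if_pos hq, if_pos hq, meas_tuple hmeas hindep hlaw m u]
      · rw [if_neg hq, if_neg hq, measure_empty]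
  · intro u u' huu'
    simp only [Function.onFun]
    split_ifs with h1 h2
    · refine Set.disjoint_left.mpr fun ω hω hω' => ?_
      exact huu' ((Set.mem_setOf_eq ▸ hω) ▸ (Set.mem_setOf_eq ▸ hω') ▸ rfl)
    · simp
    · simp
    · simp
  · intro u
    split_ifs with h1
    · exact hmeasu u
    · exact MeasurableSet.empty

lemma event_eq (ξ : ℕ → Ω → ℤ) (Tr : ℕ → ℤ → Prop) (m : ℕ) (z x : ℤ) :
    {ω | z + ∑ i ∈ Finset.range m, ξ i ω = x
        ∧ ∀ l ≤ m, ¬ Tr l (z + ∑ i ∈ Finset.range l, ξ i ω)}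
      = {ω | QQ Tr m z x (fun i : Fin m => ξ i ω)} := by
  have hps : ∀ (ω : Ω) (l : ℕ), l ≤ m →
      psum (fun i : Fin m => ξ i ω) l = ∑ i ∈ Finset.range l, ξ i ω := by
    intro ω l hl
    calc psum (fun i : Fin m => ξ i ω) l
        = ∑ i : Fin m, (fun j : ℕ => if j < l then ξ j ω else 0) (i : ℕ) :=
          Finset.sum_congr rfl fun i _ => rfl
      _ = ∑ i ∈ Finset.range m, (fun j : ℕ => if j < l then ξ j ω else 0) i :=
          Fin.sum_univ_eq_sum_range (fun j : ℕ => if j < l then ξ j ω else 0) m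
      _ = ∑ i ∈ Finset.range m, (if i < l then ξ i ω else 0) :=
          Finset.sum_congr rfl fun i _ => rfl
      _ = ∑ i ∈ Finset.range l, ξ i ω := by
          rw [← Finset.sum_filter]
          congr 1
          ext i
          simp only [Finset.mem_filter, Finset.mem_range]
          omega
  ext ω
  simp only [Set.mem_setOf_eq]
  unfold QQ
  rw [hps ω m le_rfl]
  constructor
  · rintro ⟨h1, h2⟩
    exact ⟨h1, fun l hl => by rw [hps ω l hl]; exact h2 l hl⟩
  · rintro ⟨h1, h2⟩
    refine ⟨h1, fun l hl => ?_⟩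
    have h3 := h2 l hl
    rwa [hps ω l hl] at h3

end Meas

end
end SD

/-- **Symmetric domination at all times.**  `p` is a symmetric probability distribution
on `ℤ` with `p k ≥ p (k+1)` for `k ≥ 1` and `p 0 ≥ p 3`.  For the random walk
`Z m = z + ξ 0 + ⋯ + ξ (m-1)` started at `z`, and the trap path `φ` (resp. the constant
trap path `0`), `v n x = 1 - ∑_z P_z(Z n = x, τ̃_φ > n)` (resp. `v0 n x`), where
`τ̃_φ > n` is the event that `Z m ∉ {φ m, φ (m+1)}` for all `m ≤ n`.  Then for every
`n`, every `k ≥ 0` and every `x₀ ∈ ℤ`: `∑_{|x| ≥ k} v0 n x ≤ ∑_{|x| ≥ k} v n (x₀ + x)`. -/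
theorem symmetric_domination
    (p : ℤ → ℝ≥0∞) (hsum : ∑' k : ℤ, p k = 1)
    (hsymm : ∀ k : ℤ, p (-k) = p k)
    (hmono : ∀ k : ℤ, 1 ≤ k → p (k + 1) ≤ p k)
    (h03 : p 3 ≤ p 0)
    {Ω : Type*} [MeasurableSpace Ω] (μ : Measure Ω) [IsProbabilityMeasure μ]
    (ξ : ℕ → Ω → ℤ)
    (hmeas : ∀ i, Measurable (ξ i))
    (hindep : iIndepFun ξ μ)
    (hlaw : ∀ i k, μ {ω | ξ i ω = k} = p k)
    (φ : ℕ → ℤ)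
    (v v0 : ℕ → ℤ → ℝ≥0∞)
    (hv : ∀ m x, v m x = 1 - ∑' z : ℤ, μ {ω |
      z + ∑ i ∈ Finset.range m, ξ i ω = x ∧
      ∀ l ≤ m, ¬(z + ∑ i ∈ Finset.range l, ξ i ω = φ l ∨
                 z + ∑ i ∈ Finset.range l, ξ i ω = φ (l + 1))})
    (hv0 : ∀ m x, v0 m x = 1 - ∑' z : ℤ, μ {ω |
      z + ∑ i ∈ Finset.range m, ξ i ω = x ∧
      ∀ l ≤ m, ¬(z + ∑ i ∈ Finset.range l, ξ i ω = 0)})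
    (n : ℕ) (k : ℕ) (x₀ : ℤ) :
    (∑' x : ℤ, if (k : ℤ) ≤ |x| then v0 n x else 0) ≤
      ∑' x : ℤ, if (k : ℤ) ≤ |x| then v n (x₀ + x) else 0 := by
  have hv' : ∀ m x, v m x = SD.DD p (SD.Trph φ) m x := by
    intro m x
    rw [hv m x]
    have he : ∀ z : ℤ, μ {ω |
        z + ∑ i ∈ Finset.range m, ξ i ω = x ∧
        ∀ l ≤ m, ¬(z + ∑ i ∈ Finset.range l, ξ i ω = φ l ∨
                   z + ∑ i ∈ Finset.range l, ξ i ω = φ (l + 1))}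
        = SD.AA p (SD.Trph φ) m z x := by
      intro z
      rw [show {ω |
          z + ∑ i ∈ Finset.range m, ξ i ω = x ∧
          ∀ l ≤ m, ¬(z + ∑ i ∈ Finset.range l, ξ i ω = φ l ∨
                     z + ∑ i ∈ Finset.range l, ξ i ω = φ (l + 1))}
          = {ω | SD.QQ (SD.Trph φ) m z x (fun i : Fin m => ξ i ω)} from
        SD.event_eq ξ (SD.Trph φ) m z x]
      exact SD.decomp hmeas hindep hlaw m (SD.QQ (SD.Trph φ) m z x)
    rw [tsum_congr he]
    exact (SD.DD_eq_one_sub_GG hsum (SD.Trph φ) m x).symm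
  have hv0' : ∀ m x, v0 m x = SD.DD p SD.Tr0 m x := by
    intro m x
    rw [hv0 m x]
    have he : ∀ z : ℤ, μ {ω |
        z + ∑ i ∈ Finset.range m, ξ i ω = x ∧
        ∀ l ≤ m, ¬(z + ∑ i ∈ Finset.range l, ξ i ω = 0)}
        = SD.AA p SD.Tr0 m z x := by
      intro z
      rw [show {ω |
          z + ∑ i ∈ Finset.range m, ξ i ω = x ∧
          ∀ l ≤ m, ¬(z + ∑ i ∈ Finset.range l, ξ i ω = 0)}
          = {ω | SD.QQ SD.Tr0 m z x (fun i : Fin m => ξ i ω)} from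
        SD.event_eq ξ SD.Tr0 m z x]
      exact SD.decomp hmeas hindep hlaw m (SD.QQ SD.Tr0 m z x)
    rw [tsum_congr he]
    exact (SD.DD_eq_one_sub_GG hsum SD.Tr0 m x).symm
  calc (∑' x : ℤ, if (k : ℤ) ≤ |x| then v0 n x else 0)
      = SD.tail (SD.DD p SD.Tr0 n) k 0 := by
        unfold SD.tail
        refine tsum_congr fun x => ?_
        rw [sub_zero]
        by_cases h : (k : ℤ) ≤ |x|
        · rw [if_pos h, if_pos h, hv0' n x]
        · rw [if_neg h, if_neg h]
    _ ≤ SD.tail (SD.DD p (SD.Trph φ) n) k x₀ :=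
        SD.main_R hsum hsymm hmono h03 φ n k x₀
    _ = ∑' x : ℤ, if (k : ℤ) ≤ |x| then v n (x₀ + x) else 0 := by
        unfold SD.tail
        rw [← (Equiv.addLeft x₀).tsum_eq
          (fun y => if (k : ℤ) ≤ |y - x₀| then SD.DD p (SD.Trph φ) n y else 0)]
        refine tsum_congr fun x => ?_
        simp only [Equiv.coe_addLeft]
        simp only [add_sub_cancel_left]
        by_cases h : (k : ℤ) ≤ |x|
        · rw [if_pos h, if_pos h, hv' n (x₀ + x)]
        · rw [if_neg h, if_neg h]
end
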